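/- arXiv:2605.25897 — 3 statements merged into one kernel-verified Lean document; each statement's English description precedes it below -/
import Mathlib

section
/- Let m be a positive integer and let F and G be cumulative distribution functions on ℝ with finite mean. Then for every p ∈ [1, ∞), ∫_ℝ |H_m(F)(x) − H_m(G)(x)|^p dx ≤ ∫_ℝ |F(x) − G(x)| dx; that is, ‖H_m(F) − H_m(G)‖_p^p ≤ ‖F − G‖_1, so in particular H_m is non-expansive in the L¹ norm. -/
open MeasureTheory Filter Set
open scoped BoundedContinuousFunction ProbabilityTheory

noncomputable section

/-- Density of the Beta(j, m-j+1) distribution. -/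
def betaDens (m j : ℕ) (u : ℝ) : ℝ :=
  (m : ℝ) * ((m - 1).choose (j - 1) : ℝ) * u ^ (j - 1) * (1 - u) ^ (m - j)

/-- Quantile function (left-continuous generalized inverse). -/
def quantile (G : ℝ → ℝ) (p : ℝ) : ℝ :=
  sInf {x : ℝ | p ≤ G x}

/-- `G` is a cumulative distribution function on ℝ. -/
structure IsCDF (G : ℝ → ℝ) : Prop where
  mono : Monotone G
  rightCont : ∀ x, ContinuousWithinAt G (Ici x) x
  tendsto_atBot : Tendsto G atBot (nhds 0)
  tendsto_atTop : Tendsto G atTop (nhds 1)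

/-- `G` has finite mean: its quantile function is integrable on (0,1). -/
def HasFiniteMean (G : ℝ → ℝ) : Prop :=
  IntegrableOn (fun u => quantile G u) (Ioo (0:ℝ) 1)

/-- Expected j-th order statistic from a sample of size m drawn from G. -/
def muOS (m j : ℕ) (G : ℝ → ℝ) : ℝ :=
  ∫ u in Ioo (0:ℝ) 1, quantile G u * betaDens m j u

/-- The Hoeffding CDF operator `H_m`. -/
def hoeffCDF (m : ℕ) (G : ℝ → ℝ) (x : ℝ) : ℝ :=
  (m : ℝ)⁻¹ * ∑ j ∈ Finset.Icc 1 m, if muOS m j G ≤ x then (1:ℝ) else 0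

/-- The quantile-Hoeffding operator `I_m`. -/
def quantHoeff (m : ℕ) (h : ℝ → ℝ) (u : ℝ) : ℝ :=
  ∑ j ∈ Finset.Icc 1 m,
    (∫ t in Ioo (0:ℝ) 1, h t * betaDens m j t) *
      (if u ∈ Ioc (((j : ℝ) - 1) / m) ((j : ℝ) / m) then (1:ℝ) else 0)

/-- Empirical CDF of the reals `x 0, ..., x (n-1)`. -/
def ecdf (n : ℕ) (x : ℕ → ℝ) (t : ℝ) : ℝ :=
  (n : ℝ)⁻¹ * ∑ i ∈ Finset.range n, if x i ≤ t then (1:ℝ) else 0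

/-- Empirical CDF of the random sample `X 0, ..., X (n-1)`. -/
def empCDF {Ω : Type*} (X : ℕ → Ω → ℝ) (n : ℕ) (ω : Ω) : ℝ → ℝ :=
  fun t => (n : ℝ)⁻¹ * ∑ i ∈ Finset.range n, if X i ω ≤ t then (1:ℝ) else 0

/-! ### Auxiliary lemmas -/

lemma IsCDF.nonneg' {G : ℝ → ℝ} (hG : IsCDF G) (x : ℝ) : 0 ≤ G x := by
  refine le_of_tendsto hG.tendsto_atBot ?_
  filter_upwards [eventually_le_atBot x] with y hy using hG.mono hy

lemma IsCDF.le_one' {G : ℝ → ℝ} (hG : IsCDF G) (x : ℝ) : G x ≤ 1 := by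
  refine ge_of_tendsto hG.tendsto_atTop ?_
  filter_upwards [eventually_ge_atTop x] with y hy using hG.mono hy

lemma IsCDF.setNonempty {G : ℝ → ℝ} (hG : IsCDF G) {u : ℝ} (hu1 : u < 1) :
    {x : ℝ | u ≤ G x}.Nonempty := by
  have := hG.tendsto_atTop.eventually (eventually_gt_nhds hu1)
  rcases this.exists with ⟨x, hx⟩
  exact ⟨x, hx.le⟩

lemma IsCDF.setBddBelow {G : ℝ → ℝ} (hG : IsCDF G) {u : ℝ} (hu0 : 0 < u) :
    BddBelow {x : ℝ | u ≤ G x} := by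
  have := hG.tendsto_atBot.eventually (eventually_lt_nhds hu0)
  rcases (eventually_atBot.1 this) with ⟨y, hy⟩
  refine ⟨y, fun x hx => ?_⟩
  by_contra h
  exact absurd hx (not_le.2 (hy x (le_of_not_ge h)))

lemma quantile_le_iff {G : ℝ → ℝ} (hG : IsCDF G) {u x : ℝ} (hu0 : 0 < u) (hu1 : u < 1) :
    quantile G u ≤ x ↔ u ≤ G x := by
  constructor
  · intro h
    have hq : u ≤ G (quantile G u) := by
      have hall : ∀ z ∈ Set.Ioi (quantile G u), u ≤ G z := by
        intro z hz
        obtain ⟨s, hs, hsz⟩ := exists_lt_of_csInf_lt (hG.setNonempty hu1) hz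
        exact le_trans hs (hG.mono hsz.le)
      have hlim : Tendsto G (nhdsWithin (quantile G u) (Set.Ioi (quantile G u)))
          (nhds (G (quantile G u))) :=
        (hG.rightCont (quantile G u)).mono_left (nhdsWithin_mono _ Set.Ioi_subset_Ici_self)
      exact ge_of_tendsto hlim (eventually_nhdsWithin_of_forall hall)
    exact le_trans hq (hG.mono h)
  · intro h
    exact csInf_le (hG.setBddBelow hu0) h

lemma quantile_set_eq {G : ℝ → ℝ} (hG : IsCDF G) {u : ℝ} (hu0 : 0 < u) (hu1 : u < 1) :
    {x : ℝ | u ≤ G x} = Set.Ici (quantile G u) := by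
  ext x
  simp [Set.mem_Ici, ← quantile_le_iff hG hu0 hu1, Set.mem_setOf_eq]

lemma volume_Ico_union (a b : ℝ) :
    volume (Ico a b ∪ Ico b a) = ENNReal.ofReal |a - b| := by
  rcases le_total a b with h | h
  · rw [Ico_eq_empty (by simpa using h : ¬ b < a), union_empty, Real.volume_Ico,
      abs_sub_comm, abs_of_nonneg (by linarith)]
  · rw [Ico_eq_empty (by simpa using h : ¬ a < b), empty_union, Real.volume_Ico,
      abs_of_nonneg (by linarith)]

lemma volume_Ioc_inter_Ioo {c d : ℝ} (h0 : 0 ≤ c) (h1 : d ≤ 1) :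
    volume (Ioc c d ∩ Ioo 0 1) = ENNReal.ofReal (d - c) := by
  rcases le_total d c with h | h
  · have hz : ENNReal.ofReal (d - c) = 0 := ENNReal.ofReal_eq_zero.2 (by linarith)
    rw [Ioc_eq_empty (by simpa using h : ¬ c < d), empty_inter, measure_empty, hz]
  apply le_antisymm
  · calc volume (Ioc c d ∩ Ioo 0 1) ≤ volume (Ioc c d) := measure_mono inter_subset_left
    _ = ENNReal.ofReal (d - c) := Real.volume_Ioc
  · calc ENNReal.ofReal (d - c) = volume (Ioo c d) := (Real.volume_Ioo).symm
    _ ≤ volume (Ioc c d ∩ Ioo 0 1) := by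
        refine measure_mono fun x hx => ⟨⟨hx.1, hx.2.le⟩, ?_, ?_⟩
        · linarith [hx.1]
        · linarith [hx.2]

lemma lintegral_qdiff (F G : ℝ → ℝ) (hF : IsCDF F) (hG : IsCDF G) :
    ∫⁻ u in Ioo (0:ℝ) 1, ENNReal.ofReal |quantile F u - quantile G u|
      = ∫⁻ x : ℝ, ENNReal.ofReal |F x - G x| := by
  set μ := volume.restrict (Ioo (0:ℝ) 1) with hμ
  set S : Set (ℝ × ℝ) :=
    ({p | p.1 ≤ F p.2} \ {p | p.1 ≤ G p.2}) ∪ ({p | p.1 ≤ G p.2} \ {p | p.1 ≤ F p.2}) with hSdef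
  have hA : MeasurableSet {p : ℝ × ℝ | p.1 ≤ F p.2} :=
    measurableSet_le measurable_fst (hF.mono.measurable.comp measurable_snd)
  have hB : MeasurableSet {p : ℝ × ℝ | p.1 ≤ G p.2} :=
    measurableSet_le measurable_fst (hG.mono.measurable.comp measurable_snd)
  have hS : MeasurableSet S := (hA.diff hB).union (hB.diff hA)
  have h1 : μ.prod volume S = ∫⁻ u, volume (Prod.mk u ⁻¹' S) ∂μ := Measure.prod_apply hS
  have h2 : μ.prod volume S = ∫⁻ x, μ ((fun u => (u, x)) ⁻¹' S) ∂volume :=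
    Measure.prod_apply_symm hS
  have e1 : ∫⁻ u, volume (Prod.mk u ⁻¹' S) ∂μ
      = ∫⁻ u in Ioo (0:ℝ) 1, ENNReal.ofReal |quantile F u - quantile G u| := by
    rw [hμ]
    refine lintegral_congr_ae ((ae_restrict_iff' measurableSet_Ioo).2 (ae_of_all _ fun u hu => ?_))
    have hpre : Prod.mk u ⁻¹' S
        = (Ico (quantile F u) (quantile G u)) ∪ (Ico (quantile G u) (quantile F u)) := by
      have eF := quantile_set_eq hF hu.1 hu.2
      have eG := quantile_set_eq hG hu.1 hu.2
      have h0 : Prod.mk u ⁻¹' S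
          = ({x | u ≤ F x} \ {x | u ≤ G x}) ∪ ({x | u ≤ G x} \ {x | u ≤ F x}) := by
        ext x; simp [hSdef, Set.mem_diff, Set.mem_union, Set.mem_setOf_eq]
      rw [h0, eF, eG, Ici_diff_Ici, Ici_diff_Ici]
    dsimp only
    rw [hpre, volume_Ico_union]
  have e2 : ∫⁻ x, μ ((fun u => (u, x)) ⁻¹' S) ∂volume = ∫⁻ x : ℝ, ENNReal.ofReal |F x - G x| := by
    refine lintegral_congr fun x => ?_
    have hpre : (fun u => (u, x)) ⁻¹' S = (Ioc (G x) (F x)) ∪ (Ioc (F x) (G x)) := by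
      have h0 : (fun u => (u, x)) ⁻¹' S
          = (Iic (F x) \ Iic (G x)) ∪ (Iic (G x) \ Iic (F x)) := by
        ext u
        simp only [hSdef, Set.mem_preimage, Set.mem_diff, Set.mem_union, Set.mem_setOf_eq,
          mem_Iic, not_le]
      rw [h0, Iic_sdiff_Iic, Iic_sdiff_Iic]
    rw [hpre, hμ, Measure.restrict_apply (measurableSet_Ioc.union measurableSet_Ioc)]
    rcases le_total (F x) (G x) with h | h
    · rw [Ioc_eq_empty (by simpa using h : ¬ G x < F x), empty_union,
        volume_Ioc_inter_Ioo (hF.nonneg' x) (hG.le_one' x), abs_sub_comm,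
        abs_of_nonneg (by linarith)]
    · rw [Ioc_eq_empty (by simpa using h : ¬ F x < G x), union_empty,
        volume_Ioc_inter_Ioo (hG.nonneg' x) (hF.le_one' x),
        abs_of_nonneg (by linarith)]
  rw [← e1, ← h1, h2, e2]

lemma sum_betaDens (m : ℕ) (hm : 0 < m) (u : ℝ) :
    ∑ j ∈ Finset.Icc 1 m, betaDens m j u = m := by
  have h1 : Finset.Icc 1 m = Finset.Ico 1 (m + 1) := by
    rw [Finset.Ico_add_one_right_eq_Icc]
  rw [h1, Finset.sum_Ico_eq_sum_range]
  simp only [betaDens, Nat.add_sub_cancel]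
  have h2 : ∀ i ∈ Finset.range m,
      (m : ℝ) * ((m - 1).choose (1 + i - 1) : ℝ) * u ^ (1 + i - 1) * (1 - u) ^ (m - (1 + i))
      = (m : ℝ) * (u ^ i * (1 - u) ^ ((m - 1) - i) * ((m-1).choose i : ℝ)) := by
    intro i hi
    have h : 1 + i - 1 = i := by omega
    have h3 : m - (1 + i) = (m - 1) - i := by omega
    rw [h, h3]; ring
  rw [Finset.sum_congr rfl h2, ← Finset.mul_sum]
  have h5 : ∑ i ∈ Finset.range m, u ^ i * (1 - u) ^ ((m-1) - i) * ((m-1).choose i : ℝ)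
      = (u + (1 - u)) ^ (m - 1) := by
    have hmm : m - 1 + 1 = m := by omega
    rw [add_pow, hmm]
  rw [h5]; simp

lemma betaDens_nonneg {m j : ℕ} {u : ℝ} (h0 : 0 ≤ u) (h1 : u ≤ 1) :
    0 ≤ betaDens m j u := by
  unfold betaDens
  have hc1 := Nat.cast_nonneg (α := ℝ) m
  have hc2 := Nat.cast_nonneg (α := ℝ) ((m-1).choose (j-1))
  exact mul_nonneg (mul_nonneg (mul_nonneg hc1 hc2) (pow_nonneg h0 _))
    (pow_nonneg (by linarith) _)

lemma betaDens_le {m j : ℕ} {u : ℝ} (h0 : 0 ≤ u) (h1 : u ≤ 1) :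
    betaDens m j u ≤ (m : ℝ) * ((m - 1).choose (j - 1) : ℝ) := by
  unfold betaDens
  have hu1 : u ^ (j - 1) ≤ 1 := pow_le_one₀ h0 h1
  have hu2 : (1 - u) ^ (m - j) ≤ 1 := pow_le_one₀ (by linarith) (by linarith)
  have hC : (0:ℝ) ≤ (m : ℝ) * ((m - 1).choose (j - 1) : ℝ) := by positivity
  have h3 : (0:ℝ) ≤ u ^ (j-1) := pow_nonneg h0 _
  have s1 : (m : ℝ) * ((m - 1).choose (j - 1) : ℝ) * u ^ (j - 1) * (1 - u) ^ (m - j)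
      ≤ (m : ℝ) * ((m - 1).choose (j - 1) : ℝ) * u ^ (j - 1) :=
    mul_le_of_le_one_right (mul_nonneg hC h3) hu2
  have s2 : (m : ℝ) * ((m - 1).choose (j - 1) : ℝ) * u ^ (j - 1)
      ≤ (m : ℝ) * ((m - 1).choose (j - 1) : ℝ) :=
    mul_le_of_le_one_right hC hu1
  linarith

lemma integrable_mul_betaDens {h : ℝ → ℝ} (hh : IntegrableOn h (Ioo (0:ℝ) 1)) (m j : ℕ) :
    IntegrableOn (fun u => h u * betaDens m j u) (Ioo (0:ℝ) 1) := by
  have hc : Continuous (betaDens m j) := by unfold betaDens; fun_prop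
  refine Integrable.mono'
    (g := fun u => ((m : ℝ) * ((m-1).choose (j-1) : ℝ)) * |h u|)
    ((hh.abs.const_mul _)) (hh.aestronglyMeasurable.mul hc.aestronglyMeasurable) ?_
  filter_upwards [ae_restrict_mem measurableSet_Ioo] with u hu
  rw [Real.norm_eq_abs, abs_mul]
  have hb : |betaDens m j u| ≤ (m : ℝ) * ((m-1).choose (j-1) : ℝ) := by
    rw [abs_of_nonneg (betaDens_nonneg hu.1.le hu.2.le)]
    exact betaDens_le hu.1.le hu.2.le
  calc |h u| * |betaDens m j u| ≤ |h u| * ((m : ℝ) * ((m-1).choose (j-1) : ℝ)) :=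
        mul_le_mul_of_nonneg_left hb (abs_nonneg _)
    _ = ((m : ℝ) * ((m-1).choose (j-1) : ℝ)) * |h u| := by ring

lemma abs_ind_sub_ind (a b x : ℝ) :
    |(if a ≤ x then (1:ℝ) else 0) - (if b ≤ x then (1:ℝ) else 0)|
      = (Ico (a ⊓ b) (a ⊔ b)).indicator 1 x := by
  by_cases h1 : a ≤ x <;> by_cases h2 : b ≤ x
  · rw [if_pos h1, if_pos h2, Set.indicator_of_notMem]
    · norm_num
    · exact fun h => absurd h.2 (not_lt.2 (sup_le h1 h2))
  · rw [if_pos h1, if_neg h2, Set.indicator_of_mem]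
    · norm_num
    · exact ⟨inf_le_left.trans h1, lt_of_lt_of_le (not_le.1 h2) le_sup_right⟩
  · rw [if_neg h1, if_pos h2, Set.indicator_of_mem]
    · norm_num
    · exact ⟨inf_le_right.trans h2, lt_of_lt_of_le (not_le.1 h1) le_sup_left⟩
  · rw [if_neg h1, if_neg h2, Set.indicator_of_notMem]
    · norm_num
    · exact fun h => absurd h.1 (not_le.2 (lt_inf_iff.2 ⟨not_le.1 h1, not_le.1 h2⟩))

lemma hoeffCDF_mem_Icc (m : ℕ) (hm : 0 < m) (G : ℝ → ℝ) (x : ℝ) :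
    hoeffCDF m G x ∈ Icc (0:ℝ) 1 := by
  have hm0 : ((m:ℝ))⁻¹ ≥ 0 := by positivity
  unfold hoeffCDF
  constructor
  · refine mul_nonneg hm0 (Finset.sum_nonneg fun j _ => ?_)
    split_ifs <;> norm_num
  · have hsum : (∑ j ∈ Finset.Icc 1 m, if muOS m j G ≤ x then (1:ℝ) else 0) ≤ m := by
      calc (∑ j ∈ Finset.Icc 1 m, if muOS m j G ≤ x then (1:ℝ) else 0)
          ≤ ∑ j ∈ Finset.Icc 1 m, (1:ℝ) :=
            Finset.sum_le_sum fun j _ => by split_ifs <;> norm_num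
        _ = m := by simp [Nat.card_Icc]
    calc (m : ℝ)⁻¹ * (∑ j ∈ Finset.Icc 1 m, if muOS m j G ≤ x then (1:ℝ) else 0)
        ≤ (m : ℝ)⁻¹ * m := mul_le_mul_of_nonneg_left hsum hm0
      _ = 1 := by
          field_simp

lemma muOS_sub_le (m j : ℕ) (F G : ℝ → ℝ)
    (hFm : HasFiniteMean F) (hGm : HasFiniteMean G) :
    |muOS m j F - muOS m j G|
      ≤ ∫ u in Ioo (0:ℝ) 1, |quantile F u - quantile G u| * betaDens m j u := by
  have hiF := integrable_mul_betaDens hFm m j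
  have hiG := integrable_mul_betaDens hGm m j
  rw [muOS, muOS, ← integral_sub hiF hiG]
  have h1 := norm_integral_le_integral_norm (μ := volume.restrict (Ioo (0:ℝ) 1))
      (fun u => quantile F u * betaDens m j u - quantile G u * betaDens m j u)
  simp only [Real.norm_eq_abs] at h1
  refine h1.trans (le_of_eq ?_)
  refine setIntegral_congr_fun measurableSet_Ioo fun u hu => ?_
  rw [← sub_mul, abs_mul, abs_of_nonneg (betaDens_nonneg hu.1.le hu.2.le)]

/-- The Hoeffding CDF operator is non-expansive in the `L¹` norm:
for every `p ∈ [1, ∞)`, `‖H_m(F) − H_m(G)‖_p^p ≤ ‖F − G‖₁`. -/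
theorem hoeffCDF_Lp_nonexpansive
    (m : ℕ) (hm : 0 < m) (F G : ℝ → ℝ)
    (hF : IsCDF F) (hG : IsCDF G)
    (hFmean : HasFiniteMean F) (hGmean : HasFiniteMean G)
    (p : ℝ) (hp : 1 ≤ p) :
    (∫ x : ℝ, |hoeffCDF m F x - hoeffCDF m G x| ^ p) ≤ ∫ x : ℝ, |F x - G x| := by
  have hm0 : ((m:ℝ)) ≠ 0 := Nat.cast_ne_zero.2 hm.ne'
  have hminv : (0:ℝ) ≤ (m:ℝ)⁻¹ := by positivity
  set q : ℝ → ℝ := fun u => |quantile F u - quantile G u| with hqdef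
  have hqint : IntegrableOn q (Ioo (0:ℝ) 1) := (hFmean.sub hGmean).abs
  -- Step D : ∫₀¹ |F⁻¹ - G⁻¹| = ∫ |F - G|
  have hFGmeas : AEStronglyMeasurable (fun x => |F x - G x|) volume :=
    ((hF.mono.measurable.sub hG.mono.measurable).abs).aestronglyMeasurable
  have hD : (∫ u in Ioo (0:ℝ) 1, q u) = ∫ x : ℝ, |F x - G x| := by
    rw [integral_eq_lintegral_of_nonneg_ae (ae_of_all _ fun u => abs_nonneg _)
        hqint.aestronglyMeasurable,
      integral_eq_lintegral_of_nonneg_ae (ae_of_all _ fun x => abs_nonneg _) hFGmeas]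
    congr 1
    exact lintegral_qdiff F G hF hG
  -- Step B ingredients
  have hbint : ∀ j, IntegrableOn (fun u => q u * betaDens m j u) (Ioo (0:ℝ) 1) :=
    fun j => integrable_mul_betaDens hqint m j
  -- Step C : the average of the beta-weighted integrals is the plain integral
  have hC : (m:ℝ)⁻¹ * ∑ j ∈ Finset.Icc 1 m, ∫ u in Ioo (0:ℝ) 1, q u * betaDens m j u
      = ∫ u in Ioo (0:ℝ) 1, q u := by
    rw [← integral_finset_sum _ (fun j _ => hbint j)]
    have hpt : ∀ u : ℝ, (∑ j ∈ Finset.Icc 1 m, q u * betaDens m j u) = q u * m := by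
      intro u; rw [← Finset.mul_sum, sum_betaDens m hm]
    calc (m:ℝ)⁻¹ * ∫ u in Ioo (0:ℝ) 1, ∑ j ∈ Finset.Icc 1 m, q u * betaDens m j u
        = (m:ℝ)⁻¹ * ∫ u in Ioo (0:ℝ) 1, q u * m := by
          congr 1; exact integral_congr_ae (ae_of_all _ hpt)
      _ = (m:ℝ)⁻¹ * ((∫ u in Ioo (0:ℝ) 1, q u) * m) := by rw [integral_mul_const]
      _ = ∫ u in Ioo (0:ℝ) 1, q u := by
          rw [mul_comm ((m:ℝ)⁻¹), mul_assoc, mul_inv_cancel₀ hm0, mul_one]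
  -- Step A : pointwise domination of |H_m F - H_m G| by a sum of indicators
  set a : ℕ → ℝ := fun j => muOS m j F with ha
  set b : ℕ → ℝ := fun j => muOS m j G with hb
  set g : ℝ → ℝ := fun x =>
    (m:ℝ)⁻¹ * ∑ j ∈ Finset.Icc 1 m, (Ico (a j ⊓ b j) (a j ⊔ b j)).indicator 1 x with hgdef
  have hgint : Integrable g volume := by
    refine Integrable.const_mul ?_ _
    refine integrable_finset_sum _ fun j _ => ?_
    rw [integrable_indicator_iff measurableSet_Ico]
    exact integrableOn_const (by rw [Real.volume_Ico]; exact ENNReal.ofReal_ne_top)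
  have hdg : ∀ x, |hoeffCDF m F x - hoeffCDF m G x| ≤ g x := by
    intro x
    have hdiff : hoeffCDF m F x - hoeffCDF m G x
        = (m:ℝ)⁻¹ * ∑ j ∈ Finset.Icc 1 m,
            ((if a j ≤ x then (1:ℝ) else 0) - (if b j ≤ x then (1:ℝ) else 0)) := by
      simp [hoeffCDF, Finset.sum_sub_distrib, mul_sub, ha, hb]
    rw [hdiff, abs_mul, abs_of_nonneg hminv, hgdef]
    refine mul_le_mul_of_nonneg_left ?_ hminv
    refine (Finset.abs_sum_le_sum_abs _ _).trans ?_
    refine Finset.sum_le_sum fun j _ => ?_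
    rw [abs_ind_sub_ind]
  have hd1 : ∀ x, |hoeffCDF m F x - hoeffCDF m G x| ≤ 1 := by
    intro x
    have h1 := hoeffCDF_mem_Icc m hm F x
    have h2 := hoeffCDF_mem_Icc m hm G x
    rw [abs_sub_le_iff]
    constructor <;> linarith [h1.1, h1.2, h2.1, h2.2]
  have hpow : ∀ x, |hoeffCDF m F x - hoeffCDF m G x| ^ p ≤ g x := by
    intro x
    refine le_trans ?_ (hdg x)
    rcases eq_or_lt_of_le (abs_nonneg (hoeffCDF m F x - hoeffCDF m G x)) with h | h
    · rw [← h, Real.zero_rpow (by linarith : p ≠ 0)]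
    · calc |hoeffCDF m F x - hoeffCDF m G x| ^ p
          ≤ |hoeffCDF m F x - hoeffCDF m G x| ^ (1:ℝ) :=
            Real.rpow_le_rpow_of_exponent_ge h (hd1 x) hp
        _ = |hoeffCDF m F x - hoeffCDF m G x| := Real.rpow_one _
  have hmain1 : (∫ x : ℝ, |hoeffCDF m F x - hoeffCDF m G x| ^ p) ≤ ∫ x : ℝ, g x :=
    integral_mono_of_nonneg (ae_of_all _ fun x => Real.rpow_nonneg (abs_nonneg _) p) hgint
      (ae_of_all _ hpow)
  have hgval : ∫ x : ℝ, g x = (m:ℝ)⁻¹ * ∑ j ∈ Finset.Icc 1 m, |a j - b j| := by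
    rw [hgdef]
    rw [integral_const_mul]
    congr 1
    rw [integral_finset_sum _ (fun j _ => by
      rw [integrable_indicator_iff measurableSet_Ico]
      exact integrableOn_const (by rw [Real.volume_Ico]; exact ENNReal.ofReal_ne_top))]
    refine Finset.sum_congr rfl fun j _ => ?_
    rw [integral_indicator_one measurableSet_Ico, measureReal_def, Real.volume_Ico,
      ENNReal.toReal_ofReal (by simp [sub_nonneg, inf_le_sup] : (0:ℝ) ≤ a j ⊔ b j - a j ⊓ b j),
      max_sub_min_eq_abs, abs_sub_comm]
  calc (∫ x : ℝ, |hoeffCDF m F x - hoeffCDF m G x| ^ p)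
      ≤ ∫ x : ℝ, g x := hmain1
    _ = (m:ℝ)⁻¹ * ∑ j ∈ Finset.Icc 1 m, |a j - b j| := hgval
    _ ≤ (m:ℝ)⁻¹ * ∑ j ∈ Finset.Icc 1 m, ∫ u in Ioo (0:ℝ) 1, q u * betaDens m j u := by
        refine mul_le_mul_of_nonneg_left (Finset.sum_le_sum fun j _ => ?_) hminv
        exact muOS_sub_le m j F G hFmean hGmean
    _ = ∫ u in Ioo (0:ℝ) 1, q u := hC
    _ = ∫ x : ℝ, |F x - G x| := hD
end
end

section
/- Let m be a positive integer, let G be a CDF on ℝ with finite mean, and let w : (0,1) → ℝ be a weight function such that the product G^{-1}·w is integrable on (0,1). Then T_w(H_m(G)) = T_{P_m[w]}(G), where T_w(G) = ∫₀¹ G^{-1}(u) w(u) du and P_m[w](p) = ∑_{j=1}^m f_{B_{j:m}}(p) ∫_{(j−1)/m}^{j/m} w(t) dt. In other words, every L-functional of the Hoeffding transform H_m(G) equals an L-functional of G with updated weight P_m[w]. -/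
open MeasureTheory Filter Set
open scoped BoundedContinuousFunction ProbabilityTheory

noncomputable section

/-- The L-functional with weight `w`. -/
def Lfunctional (w : ℝ → ℝ) (G : ℝ → ℝ) : ℝ :=
  ∫ u in Ioo (0:ℝ) 1, quantile G u * w u

/-- The updated weight `P_m[w]`. -/
def Pweight (m : ℕ) (w : ℝ → ℝ) (p : ℝ) : ℝ :=
  ∑ j ∈ Finset.Icc 1 m,
    betaDens m j p * ∫ t in Ioc (((j : ℝ) - 1) / m) ((j : ℝ) / m), w t

/-! ### Auxiliary lemmas -/

lemma quantile_mono {G : ℝ → ℝ} (hG : IsCDF G) {p p' : ℝ} (hp : 0 < p) (hpp : p ≤ p')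
    (hp' : p' < 1) : quantile G p ≤ quantile G p' := by
  have hbdd : BddBelow {x : ℝ | p ≤ G x} := by
    have h := hG.tendsto_atBot.eventually (eventually_lt_nhds hp)
    rw [eventually_atBot] at h
    obtain ⟨x0, hx0⟩ := h
    refine ⟨x0, fun x hx => ?_⟩
    by_contra hc
    push_neg at hc
    exact absurd hx (not_le.mpr (hx0 x hc.le))
  have hne : {x : ℝ | p' ≤ G x}.Nonempty := by
    have h := hG.tendsto_atTop.eventually (eventually_gt_nhds hp')
    obtain ⟨x, hx⟩ := h.exists
    exact ⟨x, le_of_lt hx⟩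
  exact csInf_le_csInf hbdd hne (fun x hx => le_trans hpp hx)

lemma betaDens_sub (m j : ℕ) (hj : 1 ≤ j) (hjm : j < m) (u : ℝ) :
    betaDens m (j+1) u - betaDens m j u
      = (m.choose j : ℝ) * u ^ (j-1) * (1-u) ^ (m-j-1) * ((m:ℝ)*u - j) := by
  have hpascal : (m.choose j : ℝ) = ((m-1).choose (j-1) : ℝ) + ((m-1).choose j : ℝ) := by
    have : m.choose j = (m-1).choose (j-1) + (m-1).choose j := by
      have hm : m = (m-1) + 1 := by omega
      have hjj : j = (j-1) + 1 := by omega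
      rw [hm, hjj, Nat.choose_succ_succ]
      simp
    exact_mod_cast congrArg (Nat.cast : ℕ → ℝ) this
  have hid : (j : ℝ) * (m.choose j : ℝ) = (m : ℝ) * ((m-1).choose (j-1) : ℝ) := by
    have h : m * (m-1).choose (j-1) = m.choose j * j := by
      have h := Nat.add_one_mul_choose_eq (m-1) (j-1)
      have hm : m - 1 + 1 = m := by omega
      have hjj : j - 1 + 1 = j := by omega
      rw [hm, hjj] at h
      exact h
    have : j * m.choose j = m * (m-1).choose (j-1) := by rw [h, Nat.mul_comm]
    exact_mod_cast congrArg (Nat.cast : ℕ → ℝ) this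
  unfold betaDens
  rw [Nat.add_sub_cancel, show m - (j+1) = m - j - 1 from by omega]
  have hu : u ^ j = u ^ (j-1) * u := by rw [← pow_succ]; congr 1; omega
  have hv : (1-u) ^ (m-j) = (1-u) ^ (m-j-1) * (1-u) := by rw [← pow_succ]; congr 1; omega
  rw [hu, hv]
  linear_combination (-(m:ℝ) * u^(j-1) * u * (1-u)^(m-j-1)) * hpascal
    + (u^(j-1) * (1-u)^(m-j-1)) * hid

lemma integral_Dfun (m j : ℕ) (hj : 1 ≤ j) (hjm : j < m) :
    ∫ u in Ioo (0:ℝ) 1,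
      (m.choose j : ℝ) * u ^ (j-1) * (1-u) ^ (m-j-1) * ((m:ℝ)*u - j) = 0 := by
  set D : ℝ → ℝ := fun u => (m.choose j : ℝ) * u ^ (j-1) * (1-u) ^ (m-j-1) * ((m:ℝ)*u - j)
    with hD
  set g : ℝ → ℝ := fun u => (m.choose j:ℝ) * (u^j * (1-u)^(m-j)) with hg
  have hderiv : ∀ u : ℝ, HasDerivAt g (-(D u)) u := by
    intro u
    have h1 : HasDerivAt (fun u : ℝ => u ^ j) ((j:ℝ) * u^(j-1)) u := by
      simpa using hasDerivAt_pow j u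
    have hb : HasDerivAt (fun u : ℝ => 1 - u) (-1) u := by
      simpa using (hasDerivAt_id u).const_sub 1
    have h2 : HasDerivAt (fun u : ℝ => (1-u) ^ (m-j))
        ((((m-j:ℕ):ℝ) * (1-u)^(m-j-1)) * (-1)) u := by
      have := (hasDerivAt_pow (m-j) ((1:ℝ)-u)).comp u hb
      simpa [Function.comp_def] using this
    have h3 := (h1.mul h2).const_mul ((m.choose j:ℝ))
    refine h3.congr_deriv ?_
    have hu : u ^ j = u ^ (j-1) * u := by rw [← pow_succ]; congr 1; omega
    have hv : (1-u) ^ (m-j) = (1-u) ^ (m-j-1) * (1-u) := by rw [← pow_succ]; congr 1; omega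
    have hmj : ((m-j:ℕ):ℝ) = (m:ℝ) - (j:ℝ) := by
      rw [Nat.cast_sub hjm.le]
    rw [hD]
    simp only [hu, hv, hmj]
    ring
  have hcont : Continuous D := by
    rw [hD]; continuity
  have hint : IntervalIntegrable (fun u => -(D u)) volume 0 1 :=
    (hcont.neg).intervalIntegrable 0 1
  have hFTC := intervalIntegral.integral_eq_sub_of_hasDerivAt
    (f := g) (f' := fun u => -(D u)) (a := (0:ℝ)) (b := 1)
    (fun x _ => hderiv x) hint
  have hg0 : g 0 = 0 := by
    rw [hg]; simp [zero_pow (by omega : j ≠ 0)]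
  have hg1 : g 1 = 0 := by
    rw [hg]; simp [zero_pow (by omega : m - j ≠ 0)]
  have h0 : ∫ u in (0:ℝ)..1, -(D u) = 0 := by rw [hFTC, hg0, hg1]; ring
  have h2 : ∫ u in (0:ℝ)..1, D u = 0 := by
    rw [intervalIntegral.integral_neg] at h0
    linarith
  rw [intervalIntegral.integral_of_le (by norm_num : (0:ℝ) ≤ 1)] at h2
  rw [← MeasureTheory.integral_Ioc_eq_integral_Ioo]
  exact h2

lemma integrableOn_quantile_mul {G : ℝ → ℝ} (hGmean : HasFiniteMean G) {b : ℝ → ℝ}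
    (hb : Continuous b) :
    IntegrableOn (fun u => quantile G u * b u) (Ioo (0:ℝ) 1) := by
  obtain ⟨C, hC⟩ : ∃ C, ∀ u ∈ Icc (0:ℝ) 1, ‖b u‖ ≤ C :=
    isCompact_Icc.exists_bound_of_continuousOn hb.continuousOn
  have hbound : ∀ᵐ x ∂(volume.restrict (Ioo (0:ℝ) 1)), ‖b x‖ ≤ C :=
    ae_restrict_of_forall_mem measurableSet_Ioo
      (fun x hx => hC x (Ioo_subset_Icc_self hx))
  have := Integrable.bdd_mul (f := b) (g := fun u => quantile G u) (c := C)
    hGmean (hb.aestronglyMeasurable.restrict) hbound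
  exact this.congr (Eventually.of_forall (fun x => mul_comm _ _))

lemma muOS_le_succ (m j : ℕ) (hj : 1 ≤ j) (hjm : j < m) (G : ℝ → ℝ)
    (hG : IsCDF G) (hGmean : HasFiniteMean G) :
    muOS m j G ≤ muOS m (j+1) G := by
  set q : ℝ → ℝ := fun u => quantile G u with hq
  set D : ℝ → ℝ := fun u => (m.choose j : ℝ) * u ^ (j-1) * (1-u) ^ (m-j-1) * ((m:ℝ)*u - j)
    with hD
  have hDcont : Continuous D := by rw [hD]; continuity
  have hbcont : ∀ k, Continuous (betaDens m k) := by
    intro k; unfold betaDens; continuity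
  have hint1 : IntegrableOn (fun u => q u * betaDens m (j+1) u) (Ioo (0:ℝ) 1) :=
    integrableOn_quantile_mul hGmean (hbcont (j+1))
  have hint2 : IntegrableOn (fun u => q u * betaDens m j u) (Ioo (0:ℝ) 1) :=
    integrableOn_quantile_mul hGmean (hbcont j)
  have hintD : IntegrableOn (fun u => q u * D u) (Ioo (0:ℝ) 1) :=
    integrableOn_quantile_mul hGmean hDcont
  have hintDonly : IntegrableOn D (Ioo (0:ℝ) 1) :=
    (hDcont.integrableOn_Icc).mono_set Ioo_subset_Icc_self
  have hm0 : (0:ℝ) < m := by exact_mod_cast (by omega : 0 < m)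
  have hj0 : (0:ℝ) < j := by exact_mod_cast (by omega : 0 < j)
  set c : ℝ := (j:ℝ)/(m:ℝ) with hc
  have hc0 : 0 < c := by rw [hc]; positivity
  have hc1 : c < 1 := by rw [hc, div_lt_one hm0]; exact_mod_cast hjm
  have key : muOS m (j+1) G - muOS m j G = ∫ u in Ioo (0:ℝ) 1, q u * D u := by
    unfold muOS
    rw [← integral_sub hint1 hint2]
    apply setIntegral_congr_fun measurableSet_Ioo
    intro u _
    have := betaDens_sub m j hj hjm u
    simp only [hD]
    rw [← mul_sub, this]
  have hsignD : ∀ u ∈ Ioo (0:ℝ) 1, 0 ≤ (q u - q c) * D u := by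
    intro u hu
    have hpow : (0:ℝ) ≤ u ^ (j-1) * (1-u) ^ (m-j-1) := by
      apply mul_nonneg (pow_nonneg hu.1.le _) (pow_nonneg (by linarith [hu.2]) _)
    have hch : (0:ℝ) ≤ (m.choose j : ℝ) * u ^ (j-1) * (1-u) ^ (m-j-1) := by
      have h1 : (0:ℝ) ≤ (m.choose j : ℝ) := Nat.cast_nonneg _
      nlinarith
    rcases le_total u c with h | h
    · have hmu : (m:ℝ)*u - j ≤ 0 := by
        rw [hc, le_div_iff₀ hm0] at h
        linarith
      have hDle : D u ≤ 0 := by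
        simp only [hD]
        exact mul_nonpos_of_nonneg_of_nonpos hch hmu
      have hqle : q u ≤ q c := quantile_mono hG hu.1 h hc1
      nlinarith [mul_nonneg (neg_nonneg.mpr (sub_nonpos.mpr hqle)) (neg_nonneg.mpr hDle)]
    · have hmu : (0:ℝ) ≤ (m:ℝ)*u - j := by
        rw [hc, div_le_iff₀ hm0] at h
        linarith
      have hDge : 0 ≤ D u := by
        simp only [hD]
        exact mul_nonneg hch hmu
      have hqge : q c ≤ q u := quantile_mono hG hc0 h hu.2
      exact mul_nonneg (by linarith) hDge
  have hqcD : IntegrableOn (fun u => q c * D u) (Ioo (0:ℝ) 1) := hintDonly.const_mul _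
  have hsubint : IntegrableOn (fun u => (q u - q c) * D u) (Ioo (0:ℝ) 1) := by
    have := hintD.sub hqcD
    exact this.congr (Eventually.of_forall (fun u => by simp only [Pi.sub_apply]; ring))
  have hsplit : ∫ u in Ioo (0:ℝ) 1, q u * D u
      = (∫ u in Ioo (0:ℝ) 1, (q u - q c) * D u) + q c * ∫ u in Ioo (0:ℝ) 1, D u := by
    rw [show (∫ u in Ioo (0:ℝ) 1, q u * D u)
        = ∫ u in Ioo (0:ℝ) 1, ((q u - q c) * D u + q c * D u) from
      setIntegral_congr_fun measurableSet_Ioo (fun u _ => by ring)]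
    rw [integral_add hsubint hqcD, integral_const_mul]
  have hD0 : ∫ u in Ioo (0:ℝ) 1, D u = 0 := integral_Dfun m j hj hjm
  have hnonneg : 0 ≤ ∫ u in Ioo (0:ℝ) 1, (q u - q c) * D u :=
    setIntegral_nonneg measurableSet_Ioo hsignD
  have : 0 ≤ muOS m (j+1) G - muOS m j G := by
    rw [key, hsplit, hD0, mul_zero, add_zero]
    exact hnonneg
  linarith

lemma muOS_mono (m : ℕ) (G : ℝ → ℝ) (hG : IsCDF G) (hGmean : HasFiniteMean G)
    {j k : ℕ} (hj : 1 ≤ j) (hjk : j ≤ k) (hk : k ≤ m) :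
    muOS m j G ≤ muOS m k G := by
  induction k, hjk using Nat.le_induction with
  | base => exact le_refl _
  | succ n hn ih =>
    have h1 : muOS m j G ≤ muOS m n G := ih (by omega)
    have h2 : muOS m n G ≤ muOS m (n+1) G :=
      muOS_le_succ m n (by omega) (by omega) G hG hGmean
    linarith

lemma quantile_hoeffCDF (m : ℕ) (hm : 0 < m) (G : ℝ → ℝ) (hG : IsCDF G)
    (hGmean : HasFiniteMean G) {k : ℕ} (hk1 : 1 ≤ k) (hkm : k ≤ m) {u : ℝ}
    (hu1 : ((k:ℝ)-1)/m < u) (hu2 : u ≤ (k:ℝ)/m) :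
    quantile (hoeffCDF m G) u = muOS m k G := by
  have hm0 : (0:ℝ) < m := by exact_mod_cast hm
  have hmem : u ≤ hoeffCDF m G (muOS m k G) := by
    have hsum1 : (k:ℝ) ≤ ∑ j ∈ Finset.Icc 1 m,
        (if muOS m j G ≤ muOS m k G then (1:ℝ) else 0) := by
      have e1 : (k:ℝ) = ∑ j ∈ Finset.Icc 1 k, (1:ℝ) := by
        simp [Nat.card_Icc]
      rw [e1]
      have e2 : ∑ j ∈ Finset.Icc 1 k, (1:ℝ)
          = ∑ j ∈ Finset.Icc 1 k, (if muOS m j G ≤ muOS m k G then (1:ℝ) else 0) := by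
        apply Finset.sum_congr rfl
        intro j hj
        rw [Finset.mem_Icc] at hj
        rw [if_pos (muOS_mono m G hG hGmean hj.1 hj.2 hkm)]
      rw [e2]
      apply Finset.sum_le_sum_of_subset_of_nonneg (Finset.Icc_subset_Icc_right hkm)
      intro j _ _
      positivity
    unfold hoeffCDF
    calc u ≤ (k:ℝ)/m := hu2
    _ = (m:ℝ)⁻¹ * k := by ring
    _ ≤ _ := by
      apply mul_le_mul_of_nonneg_left hsum1 (by positivity)
  have hlb : ∀ x, u ≤ hoeffCDF m G x → muOS m k G ≤ x := by
    intro x hx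
    by_contra hcon
    push_neg at hcon
    have hsum2 : ∑ j ∈ Finset.Icc 1 m, (if muOS m j G ≤ x then (1:ℝ) else 0)
        ≤ ((k:ℝ) - 1) := by
      have hterm : ∀ j ∈ Finset.Icc 1 m,
          (if muOS m j G ≤ x then (1:ℝ) else 0) ≤ (if j ≤ k-1 then (1:ℝ) else 0) := by
        intro j hj
        rw [Finset.mem_Icc] at hj
        rcases le_or_gt j (k-1) with h | h
        · rw [if_pos h]
          split <;> norm_num
        · have hjk : k ≤ j := by omega
          have hmu : muOS m k G ≤ muOS m j G := muOS_mono m G hG hGmean hk1 hjk hj.2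
          rw [if_neg (show ¬ muOS m j G ≤ x by linarith),
            if_neg (show ¬ j ≤ k - 1 by omega)]
      calc ∑ j ∈ Finset.Icc 1 m, (if muOS m j G ≤ x then (1:ℝ) else 0)
          ≤ ∑ j ∈ Finset.Icc 1 m, (if j ≤ k-1 then (1:ℝ) else 0) :=
            Finset.sum_le_sum hterm
        _ = ∑ j ∈ Finset.Icc 1 (k-1), (1:ℝ) := by
            rw [← Finset.sum_subset (Finset.Icc_subset_Icc_right (by omega : k-1 ≤ m))]
            · apply Finset.sum_congr rfl
              intro j hj
              rw [Finset.mem_Icc] at hj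
              rw [if_pos hj.2]
            · intro j hj hnot
              rw [Finset.mem_Icc] at hj hnot
              rw [if_neg (by omega)]
        _ = ((k:ℝ) - 1) := by
            rw [Finset.sum_const, Nat.card_Icc, nsmul_eq_mul, mul_one,
              show k - 1 + 1 - 1 = k - 1 from by omega, Nat.cast_sub hk1, Nat.cast_one]
    have : hoeffCDF m G x ≤ ((k:ℝ)-1)/m := by
      unfold hoeffCDF
      rw [div_eq_inv_mul]
      apply mul_le_mul_of_nonneg_left hsum2 (by positivity)
    linarith
  unfold quantile
  apply le_antisymm
  · exact csInf_le ⟨muOS m k G, fun x hx => hlb x hx⟩ hmem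
  · exact le_csInf ⟨_, hmem⟩ (fun x hx => hlb x hx)

/-- Closure of L-functionals under the Hoeffding operator:
`T_w(H_m(G)) = T_{P_m[w]}(G)`. -/
theorem Lfunctional_hoeffCDF
    (m : ℕ) (hm : 0 < m) (G w : ℝ → ℝ)
    (hG : IsCDF G) (hGmean : HasFiniteMean G)
    (hw : IntegrableOn w (Ioo (0:ℝ) 1))
    (hGw : IntegrableOn (fun u => quantile G u * w u) (Ioo (0:ℝ) 1)) :
    Lfunctional w (hoeffCDF m G) = Lfunctional (Pweight m w) G := by
  have hm0 : (0:ℝ) < m := by exact_mod_cast hm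
  have hbcont : ∀ k, Continuous (betaDens m k) := by
    intro k; unfold betaDens; continuity
  have hstep : ∀ u ∈ Ioo (0:ℝ) 1, quantile (hoeffCDF m G) u * w u
      = ∑ j ∈ Finset.Icc 1 m, muOS m j G *
          ((if u ∈ Ioc (((j:ℝ)-1)/m) ((j:ℝ)/m) then (1:ℝ) else 0) * w u) := by
    intro u hu
    set k := ⌈(m:ℝ)*u⌉₊ with hk
    have hmu0 : 0 < (m:ℝ)*u := by nlinarith [hu.1]
    have hk1 : 1 ≤ k := Nat.one_le_iff_ne_zero.mpr (by
      intro h0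
      have := Nat.ceil_pos.mpr hmu0
      omega)
    have hkm : k ≤ m := Nat.ceil_le.mpr (by nlinarith [hu.2])
    have hle := Nat.le_ceil ((m:ℝ)*u)
    have hlt := Nat.ceil_lt_add_one hmu0.le
    have hu2 : u ≤ (k:ℝ)/m := by
      rw [le_div_iff₀ hm0]
      rw [← hk] at hle
      linarith
    have hu1 : ((k:ℝ)-1)/m < u := by
      rw [div_lt_iff₀ hm0]
      rw [← hk] at hlt
      linarith
    rw [quantile_hoeffCDF m hm G hG hGmean hk1 hkm hu1 hu2]
    rw [Finset.sum_eq_single k]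
    · have hmemk : u ∈ Ioc (((k:ℝ)-1)/m) ((k:ℝ)/m) := Set.mem_Ioc.mpr ⟨hu1, hu2⟩
      rw [if_pos hmemk, one_mul]
    · intro j hj hne
      rw [Finset.mem_Icc] at hj
      have hnotmem : u ∉ Ioc (((j:ℝ)-1)/m) ((j:ℝ)/m) := by
        intro hmem
        rcases lt_or_gt_of_ne hne with h | h
        · have hcast : (j:ℝ) ≤ (k:ℝ) - 1 := by
            have : (j:ℝ) + 1 ≤ (k:ℝ) := by exact_mod_cast h
            linarith
          have hdiv : (j:ℝ)/m ≤ ((k:ℝ)-1)/m := by gcongr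
          exact absurd hmem.2 (not_le.mpr (lt_of_le_of_lt hdiv hu1))
        · have hcast : (k:ℝ) ≤ (j:ℝ) - 1 := by
            have : (k:ℝ) + 1 ≤ (j:ℝ) := by exact_mod_cast h
            linarith
          have hdiv : (k:ℝ)/m ≤ ((j:ℝ)-1)/m := by gcongr
          exact absurd hmem.1 (not_lt.mpr (le_trans hu2 hdiv))
      rw [if_neg hnotmem, zero_mul, mul_zero]
    · intro habs
      exact absurd (Finset.mem_Icc.mpr ⟨hk1, hkm⟩) habs
  have hindrw : ∀ j : ℕ,
      (fun u => (if u ∈ Ioc (((j:ℝ)-1)/m) ((j:ℝ)/m) then (1:ℝ) else 0) * w u)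
        = (Ioc (((j:ℝ)-1)/m) ((j:ℝ)/m)).indicator w := by
    intro j
    funext u
    simp only [Set.indicator_apply]
    split_ifs <;> simp
  have hpiece : ∀ j : ℕ, IntegrableOn (fun u => muOS m j G *
      ((if u ∈ Ioc (((j:ℝ)-1)/m) ((j:ℝ)/m) then (1:ℝ) else 0) * w u)) (Ioo (0:ℝ) 1) := by
    intro j
    apply Integrable.const_mul
    rw [hindrw j]
    exact hw.indicator measurableSet_Ioc
  have hL : Lfunctional w (hoeffCDF m G)
      = ∑ j ∈ Finset.Icc 1 m, muOS m j G * ∫ u in Ioo (0:ℝ) 1,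
          (if u ∈ Ioc (((j:ℝ)-1)/m) ((j:ℝ)/m) then (1:ℝ) else 0) * w u := by
    unfold Lfunctional
    rw [setIntegral_congr_fun measurableSet_Ioo hstep]
    rw [integral_finset_sum _ (fun j _ => hpiece j)]
    exact Finset.sum_congr rfl (fun j _ => integral_const_mul _ _)
  have hind : ∀ j ∈ Finset.Icc 1 m, (∫ u in Ioo (0:ℝ) 1,
      (if u ∈ Ioc (((j:ℝ)-1)/m) ((j:ℝ)/m) then (1:ℝ) else 0) * w u)
      = ∫ t in Ioc (((j:ℝ)-1)/m) ((j:ℝ)/m), w t := by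
    intro j hj
    rw [Finset.mem_Icc] at hj
    rw [hindrw j, setIntegral_indicator measurableSet_Ioc]
    apply setIntegral_congr_set
    have hj1 : (0:ℝ) ≤ ((j:ℝ)-1)/m := by
      apply div_nonneg _ hm0.le
      have : (1:ℝ) ≤ (j:ℝ) := by exact_mod_cast hj.1
      linarith
    have hj2 : ((j:ℝ))/m ≤ 1 := by
      rw [div_le_one hm0]
      exact_mod_cast hj.2
    rw [MeasureTheory.ae_eq_set]
    constructor
    · have : (Ioo (0:ℝ) 1 ∩ Ioc (((j:ℝ)-1)/m) ((j:ℝ)/m))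
          \ Ioc (((j:ℝ)-1)/m) ((j:ℝ)/m) = ∅ := by
        ext x
        simp only [mem_diff, mem_inter_iff, mem_empty_iff_false, iff_false, not_and, and_imp]
        tauto
      rw [this]
      exact measure_empty
    · have hsub : Ioc (((j:ℝ)-1)/m) ((j:ℝ)/m)
          \ (Ioo (0:ℝ) 1 ∩ Ioc (((j:ℝ)-1)/m) ((j:ℝ)/m)) ⊆ {(1:ℝ)} := by
        intro x hx
        obtain ⟨hx1, hx2⟩ := hx
        have hx0 : 0 < x := lt_of_le_of_lt hj1 hx1.1
        have hxle : x ≤ 1 := le_trans hx1.2 hj2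
        simp only [mem_singleton_iff]
        by_contra hne
        exact hx2 ⟨⟨hx0, lt_of_le_of_ne hxle hne⟩, hx1⟩
      exact measure_mono_null hsub (by simp)
  have hR : Lfunctional (Pweight m w) G
      = ∑ j ∈ Finset.Icc 1 m, muOS m j G * ∫ t in Ioc (((j:ℝ)-1)/m) ((j:ℝ)/m), w t := by
    unfold Lfunctional Pweight
    have hpt : ∀ u ∈ Ioo (0:ℝ) 1, quantile G u * (∑ j ∈ Finset.Icc 1 m,
        betaDens m j u * ∫ t in Ioc (((j:ℝ)-1)/m) ((j:ℝ)/m), w t)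
        = ∑ j ∈ Finset.Icc 1 m, (quantile G u * betaDens m j u)
            * ∫ t in Ioc (((j:ℝ)-1)/m) ((j:ℝ)/m), w t := by
      intro u _
      rw [Finset.mul_sum]
      exact Finset.sum_congr rfl (fun j _ => by ring)
    rw [setIntegral_congr_fun measurableSet_Ioo hpt]
    rw [integral_finset_sum _
      (fun j _ => (integrableOn_quantile_mul hGmean (hbcont j)).mul_const _)]
    apply Finset.sum_congr rfl
    intro j _
    rw [integral_mul_const]
    rfl
  rw [hL, hR]
  exact Finset.sum_congr rfl (fun j hj => by rw [hind j hj])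
end
end

section
/- Let m ≥ 2 be an integer and G a CDF on ℝ with finite mean and λ₂(G) ≠ 0. Then the L-skewness and L-kurtosis of the Hoeffding transform satisfy λ₃(H_m(G))/λ₂(H_m(G)) = ((m−2)/m) · λ₃(G)/λ₂(G) and λ₄(H_m(G))/λ₂(H_m(G)) = ((m−2)(m−3)/m²) · λ₄(G)/λ₂(G) − 1/m². In particular, applied to the empirical CDF 𝔽_n of a non-degenerate sample, Sk(𝔽_{n,m}) = ((m−2)/m) Sk(𝔽_n) and Kurt(𝔽_{n,m}) = ((m−2)(m−3)/m²) Kurt(𝔽_n) − 1/m², where Sk = λ₃/λ₂ and Kurt = λ₄/λ₂. -/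
open MeasureTheory Filter Set
open scoped BoundedContinuousFunction ProbabilityTheory

noncomputable section

/-- The L-scale (second L-moment) `λ₂`. -/
def lambda2 (G : ℝ → ℝ) : ℝ :=
  ∫ p in Ioo (0:ℝ) 1, quantile G p * (2 * p - 1)

/-- The third L-moment `λ₃`. -/
def lambda3 (G : ℝ → ℝ) : ℝ :=
  ∫ p in Ioo (0:ℝ) 1, quantile G p * (6 * p ^ 2 - 6 * p + 1)

/-- The fourth L-moment `λ₄`. -/
def lambda4 (G : ℝ → ℝ) : ℝ :=
  ∫ p in Ioo (0:ℝ) 1, quantile G p * (20 * p ^ 3 - 30 * p ^ 2 + 12 * p - 1)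

namespace HoeffAux
open Finset

/-- fundamental: integral of derivative of polynomial -/
lemma intF {a b : ℝ} {f f' : ℝ → ℝ} (h : ∀ x, HasDerivAt f (f' x) x) (hc : Continuous f') :
    ∫ p in a..b, f' p = f b - f a :=
  intervalIntegral.integral_eq_sub_of_hasDerivAt (fun x _ => h x) (hc.intervalIntegrable _ _)

lemma intW1 (a b : ℝ) : ∫ p in a..b, (2*p - 1) = (b^2 - b) - (a^2 - a) := by
  apply intF (f := fun p => p^2 - p)
  · intro x
    have := (hasDerivAt_pow 2 x).sub (hasDerivAt_id x)
    exact this.congr_deriv (by push_cast; ring)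
  · continuity

lemma intW2 (a b : ℝ) : ∫ p in a..b, (6*p^2 - 6*p + 1)
    = (2*b^3 - 3*b^2 + b) - (2*a^3 - 3*a^2 + a) := by
  apply intF (f := fun p => 2*p^3 - 3*p^2 + p)
  · intro x
    have := (((hasDerivAt_pow 3 x).const_mul (2:ℝ)).sub ((hasDerivAt_pow 2 x).const_mul (3:ℝ))).add (hasDerivAt_id x)
    exact this.congr_deriv (by push_cast; ring)
  · continuity

lemma intW3 (a b : ℝ) : ∫ p in a..b, (20*p^3 - 30*p^2 + 12*p - 1)
    = (5*b^4 - 10*b^3 + 6*b^2 - b) - (5*a^4 - 10*a^3 + 6*a^2 - a) := by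
  apply intF (f := fun p => 5*p^4 - 10*p^3 + 6*p^2 - p)
  · intro x
    have := ((((hasDerivAt_pow 4 x).const_mul (5:ℝ)).sub ((hasDerivAt_pow 3 x).const_mul (10:ℝ))).add ((hasDerivAt_pow 2 x).const_mul (6:ℝ))).sub (hasDerivAt_id x)
    exact this.congr_deriv (by push_cast; ring)
  · continuity

lemma descFactorial_choose {n r i : ℕ} (h : r + i ≤ n) :
    (r+i).descFactorial r * n.choose (r+i) = n.descFactorial r * (n-r).choose i := by
  have hrn : r ≤ n := by omega
  have hin : i ≤ n - r := by omega
  have key : ((r+i).descFactorial r * n.choose (r+i)) * ((Nat.factorial i) * (Nat.factorial (n-r-i)))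
      = (n.descFactorial r * (n-r).choose i) * ((Nat.factorial i) * (Nat.factorial (n-r-i))) := by
    have e1 : (Nat.factorial i) * (r+i).descFactorial r = (Nat.factorial (r+i)) := by
      have := Nat.factorial_mul_descFactorial (show r ≤ r + i by omega)
      simpa using this
    have e2 : n.choose (r+i) * (Nat.factorial (r+i)) * (Nat.factorial (n-(r+i))) = (Nat.factorial n) := Nat.choose_mul_factorial_mul_factorial h
    have e3 : (n-r).choose i * (Nat.factorial i) * (Nat.factorial ((n-r)-i)) = (Nat.factorial (n-r)) := Nat.choose_mul_factorial_mul_factorial hin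
    have e4 : (Nat.factorial (n-r)) * n.descFactorial r = (Nat.factorial n) := Nat.factorial_mul_descFactorial hrn
    calc (r+i).descFactorial r * n.choose (r+i) * ((Nat.factorial i) * (Nat.factorial (n-r-i)))
        = (n.choose (r+i) * ((Nat.factorial i) * (r+i).descFactorial r)) * (Nat.factorial (n-r-i)) := by ring
      _ = n.choose (r+i) * (Nat.factorial (r+i)) * (Nat.factorial (n-(r+i))) := by rw [e1, show n-(r+i) = n-r-i by omega]
      _ = (Nat.factorial n) := e2
      _ = (Nat.factorial (n-r)) * n.descFactorial r := e4.symm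
      _ = ((n-r).choose i * (Nat.factorial i) * (Nat.factorial ((n-r)-i))) * n.descFactorial r := by rw [e3]
      _ = n.descFactorial r * (n-r).choose i * ((Nat.factorial i) * (Nat.factorial (n-r-i))) := by ring
  exact Nat.eq_of_mul_eq_mul_right (by positivity) key

/-- Binomial descending-factorial moment identity. -/
lemma sum_descFactorial_bern (n r : ℕ) (u : ℝ) :
    ∑ k ∈ range (n+1), (k.descFactorial r : ℝ) * (n.choose k : ℝ) * u^k * (1-u)^(n-k)
      = (n.descFactorial r : ℝ) * u^r := by
  rcases le_or_gt r n with h | h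
  · rw [range_eq_Ico, ← Finset.sum_Ico_consecutive _ (Nat.zero_le r) (by omega : r ≤ n+1)]
    have h0 : ∑ k ∈ Ico 0 r, (k.descFactorial r : ℝ) * (n.choose k : ℝ) * u^k * (1-u)^(n-k) = 0 := by
      apply Finset.sum_eq_zero
      intro k hk
      have hkr : k < r := (Finset.mem_Ico.1 hk).2
      simp [Nat.descFactorial_eq_zero_iff_lt.2 hkr]
    rw [h0, zero_add, Finset.sum_Ico_eq_sum_range]
    have hrw : ∀ i ∈ range (n+1-r),
        ((r+i).descFactorial r : ℝ) * (n.choose (r+i) : ℝ) * u^(r+i) * (1-u)^(n-(r+i))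
        = (n.descFactorial r : ℝ) * u^r * (u^i * (1-u)^(n-r-i) * ((n-r).choose i : ℝ)) := by
      intro i hi
      have hin : r + i ≤ n := by have := Finset.mem_range.1 hi; omega
      have := descFactorial_choose hin
      have hc : ((r+i).descFactorial r : ℝ) * (n.choose (r+i) : ℝ)
          = (n.descFactorial r : ℝ) * ((n-r).choose i : ℝ) := by exact_mod_cast congrArg (Nat.cast (R := ℝ)) this
      rw [show n-(r+i) = n-r-i by omega, pow_add]
      calc ((r+i).descFactorial r : ℝ) * (n.choose (r+i) : ℝ) * (u^r * u^i) * (1-u)^(n-r-i)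
          = (((r+i).descFactorial r : ℝ) * (n.choose (r+i) : ℝ)) * (u^r * u^i) * (1-u)^(n-r-i) := by ring
        _ = ((n.descFactorial r : ℝ) * ((n-r).choose i : ℝ)) * (u^r * u^i) * (1-u)^(n-r-i) := by rw [hc]
        _ = (n.descFactorial r : ℝ) * u^r * (u^i * (1-u)^(n-r-i) * ((n-r).choose i : ℝ)) := by ring
    rw [Finset.sum_congr rfl hrw, ← Finset.mul_sum]
    have hone : ∑ i ∈ range (n+1-r), u^i * (1-u)^(n-r-i) * ((n-r).choose i : ℝ) = 1 := by
      have := add_pow u (1-u) (n-r)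
      rw [show u + (1-u) = 1 by ring, one_pow] at this
      rw [show n+1-r = (n-r)+1 by omega]
      exact this.symm
    rw [hone, mul_one]
  · have hz : (n.descFactorial r : ℝ) = 0 := by
      rw [Nat.descFactorial_eq_zero_iff_lt.2 h]; norm_num
    rw [hz, zero_mul]
    apply Finset.sum_eq_zero
    intro k hk
    have : k < r := by have := Finset.mem_range.1 hk; omega
    simp [Nat.descFactorial_eq_zero_iff_lt.2 this]

lemma d1cast (k : ℕ) : (k.descFactorial 1 : ℝ) = k := by simp

lemma d2cast (k : ℕ) : (k.descFactorial 2 : ℝ) = k * ((k:ℝ) - 1) := by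
  rcases k with _ | k
  · simp
  · simp [Nat.descFactorial_succ, Nat.descFactorial_one]
    push_cast; ring

lemma d3cast (k : ℕ) : (k.descFactorial 3 : ℝ) = k * ((k:ℝ) - 1) * ((k:ℝ) - 2) := by
  rcases k with _ | k
  · simp
  · rcases k with _ | k
    · simp [Nat.descFactorial]
    · simp [Nat.descFactorial_succ, Nat.descFactorial_one]
      push_cast; ring

end HoeffAux
namespace HoeffAux
open Finset

lemma S0 (n : ℕ) (u : ℝ) :
    ∑ k ∈ range (n+1), (n.choose k : ℝ) * u^k * (1-u)^(n-k) = 1 := by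
  have h := sum_descFactorial_bern n 0 u
  simpa using h

lemma S1 (n : ℕ) (u : ℝ) :
    ∑ k ∈ range (n+1), (k:ℝ) * ((n.choose k : ℝ) * u^k * (1-u)^(n-k)) = (n:ℝ) * u := by
  have h := sum_descFactorial_bern n 1 u
  rw [show (∑ k ∈ range (n+1), _) = ∑ k ∈ range (n+1), (k.descFactorial 1 : ℝ) * (n.choose k : ℝ) * u^k * (1-u)^(n-k) from Finset.sum_congr rfl (fun k _ => by rw [d1cast]; ring), h, d1cast]; ring

lemma S2 (n : ℕ) (u : ℝ) :
    ∑ k ∈ range (n+1), ((k:ℝ) * ((k:ℝ)-1)) * ((n.choose k : ℝ) * u^k * (1-u)^(n-k))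
      = (n:ℝ) * ((n:ℝ)-1) * u^2 := by
  have h := sum_descFactorial_bern n 2 u
  rw [show (∑ k ∈ range (n+1), _) = ∑ k ∈ range (n+1), (k.descFactorial 2 : ℝ) * (n.choose k : ℝ) * u^k * (1-u)^(n-k) from Finset.sum_congr rfl (fun k _ => by rw [d2cast]; ring), h, d2cast]

lemma S3 (n : ℕ) (u : ℝ) :
    ∑ k ∈ range (n+1), ((k:ℝ) * ((k:ℝ)-1) * ((k:ℝ)-2)) * ((n.choose k : ℝ) * u^k * (1-u)^(n-k))
      = (n:ℝ) * ((n:ℝ)-1) * ((n:ℝ)-2) * u^3 := by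
  have h := sum_descFactorial_bern n 3 u
  rw [show (∑ k ∈ range (n+1), _) = ∑ k ∈ range (n+1), (k.descFactorial 3 : ℝ) * (n.choose k : ℝ) * u^k * (1-u)^(n-k) from Finset.sum_congr rfl (fun k _ => by rw [d3cast]; ring), h, d3cast]

lemma sum_Icc_one (m : ℕ) (f : ℕ → ℝ) : ∑ j ∈ Icc 1 m, f j = ∑ k ∈ range m, f (k+1) := by
  rw [← Finset.Ico_add_one_right_eq_Icc, Finset.sum_Ico_eq_sum_range]
  simp [Nat.add_comm]

lemma betaDens_succ (n k : ℕ) (u : ℝ) :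
    betaDens (n+1) (k+1) u = ((n+1:ℕ):ℝ) * ((n.choose k : ℝ) * u^k * (1-u)^(n-k)) := by
  unfold betaDens
  rw [show k+1-1 = k from rfl, show (n+1)-(k+1) = n-k by omega, show (n+1)-1 = n from rfl]
  push_cast; ring

lemma key2 {m : ℕ} (hm : 1 ≤ m) (u : ℝ) :
    ∑ j ∈ Icc 1 m, ((2*(j:ℝ)-1-m)/(m:ℝ)^2) * betaDens m j u
      = ((m:ℝ)-1)/m * (2*u-1) := by
  obtain ⟨n, rfl⟩ : ∃ n, m = n + 1 := ⟨m-1, by omega⟩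
  set cm : ℝ := ((n+1:ℕ):ℝ) with hcm
  have hcm0 : cm ≠ 0 := by positivity
  rw [sum_Icc_one]
  have hterm : ∀ k ∈ range (n+1),
      ((2*((k+1:ℕ):ℝ)-1-((n+1:ℕ):ℝ))/((n+1:ℕ):ℝ)^2) * betaDens (n+1) (k+1) u
      = (2*cm/cm^2) * ((k:ℝ) * ((n.choose k : ℝ) * u^k * (1-u)^(n-k)))
        + ((1-cm)*cm/cm^2) * ((n.choose k : ℝ) * u^k * (1-u)^(n-k)) := by
    intro k _
    rw [betaDens_succ]
    push_cast [hcm]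
    ring
  rw [Finset.sum_congr rfl hterm, Finset.sum_add_distrib, ← Finset.mul_sum, ← Finset.mul_sum,
    S1, S0]
  have hn : (n:ℝ) = cm - 1 := by push_cast [hcm]; ring
  rw [hn]
  field_simp
  ring

lemma key3 {m : ℕ} (hm : 1 ≤ m) (u : ℝ) :
    ∑ j ∈ Icc 1 m, ((6*(j:ℝ)^2 - 6*j + 2 - (6*(j:ℝ)-3)*m + (m:ℝ)^2)/(m:ℝ)^3) * betaDens m j u
      = ((m:ℝ)-1)*((m:ℝ)-2)/(m:ℝ)^2 * (6*u^2-6*u+1) := by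
  obtain ⟨n, rfl⟩ : ∃ n, m = n + 1 := ⟨m-1, by omega⟩
  set cm : ℝ := ((n+1:ℕ):ℝ) with hcm
  have hcm0 : cm ≠ 0 := by positivity
  rw [sum_Icc_one]
  have hterm : ∀ k ∈ range (n+1),
      ((6*((k+1:ℕ):ℝ)^2 - 6*((k+1:ℕ):ℝ) + 2 - (6*((k+1:ℕ):ℝ)-3)*((n+1:ℕ):ℝ) + ((n+1:ℕ):ℝ)^2)/((n+1:ℕ):ℝ)^3) * betaDens (n+1) (k+1) u
      = (6*cm/cm^3) * (((k:ℝ)*((k:ℝ)-1)) * ((n.choose k : ℝ) * u^k * (1-u)^(n-k)))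
        + ((12-6*cm)*cm/cm^3) * ((k:ℝ) * ((n.choose k : ℝ) * u^k * (1-u)^(n-k)))
        + ((2-3*cm+cm^2)*cm/cm^3) * ((n.choose k : ℝ) * u^k * (1-u)^(n-k)) := by
    intro k _
    rw [betaDens_succ]
    push_cast [hcm]
    ring
  rw [Finset.sum_congr rfl hterm, Finset.sum_add_distrib, Finset.sum_add_distrib,
    ← Finset.mul_sum, ← Finset.mul_sum, ← Finset.mul_sum, S2, S1, S0]
  have hn : (n:ℝ) = cm - 1 := by push_cast [hcm]; ring
  rw [hn]
  field_simp
  ring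

lemma key4 {m : ℕ} (hm : 1 ≤ m) (u : ℝ) :
    ∑ j ∈ Icc 1 m, ((20*(j:ℝ)^3 - 30*(j:ℝ)^2 + 20*(j:ℝ) - 5
        - (30*(j:ℝ)^2 - 30*(j:ℝ) + 10)*m + (12*(j:ℝ)-6)*(m:ℝ)^2 - (m:ℝ)^3)/(m:ℝ)^4)
        * betaDens m j u
      = ((m:ℝ)-1)*((m:ℝ)-2)*((m:ℝ)-3)/(m:ℝ)^3 * (20*u^3-30*u^2+12*u-1)
        - ((m:ℝ)-1)/(m:ℝ)^3 * (2*u-1) := by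
  obtain ⟨n, rfl⟩ : ∃ n, m = n + 1 := ⟨m-1, by omega⟩
  set cm : ℝ := ((n+1:ℕ):ℝ) with hcm
  have hcm0 : cm ≠ 0 := by positivity
  rw [sum_Icc_one]
  have hterm : ∀ k ∈ range (n+1),
      ((20*((k+1:ℕ):ℝ)^3 - 30*((k+1:ℕ):ℝ)^2 + 20*((k+1:ℕ):ℝ) - 5
        - (30*((k+1:ℕ):ℝ)^2 - 30*((k+1:ℕ):ℝ) + 10)*((n+1:ℕ):ℝ) + (12*((k+1:ℕ):ℝ)-6)*((n+1:ℕ):ℝ)^2 - ((n+1:ℕ):ℝ)^3)/((n+1:ℕ):ℝ)^4)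
        * betaDens (n+1) (k+1) u
      = (20*cm/cm^4) * (((k:ℝ)*((k:ℝ)-1)*((k:ℝ)-2)) * ((n.choose k : ℝ) * u^k * (1-u)^(n-k)))
        + ((90-30*cm)*cm/cm^4) * (((k:ℝ)*((k:ℝ)-1)) * ((n.choose k : ℝ) * u^k * (1-u)^(n-k)))
        + ((70-60*cm+12*cm^2)*cm/cm^4) * ((k:ℝ) * ((n.choose k : ℝ) * u^k * (1-u)^(n-k)))
        + ((5-10*cm+6*cm^2-cm^3)*cm/cm^4) * ((n.choose k : ℝ) * u^k * (1-u)^(n-k)) := by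
    intro k _
    rw [betaDens_succ]
    push_cast [hcm]
    ring
  rw [Finset.sum_congr rfl hterm, Finset.sum_add_distrib, Finset.sum_add_distrib,
    Finset.sum_add_distrib, ← Finset.mul_sum, ← Finset.mul_sum, ← Finset.mul_sum,
    ← Finset.mul_sum, S3, S2, S1, S0]
  have hn : (n:ℝ) = cm - 1 := by push_cast [hcm]; ring
  rw [hn]
  field_simp
  ring

end HoeffAux
namespace HoeffAux
open Finset

def stepCDF (n : ℕ) (v : ℕ → ℝ) (x : ℝ) : ℝ :=
  (n:ℝ)⁻¹ * ∑ j ∈ Finset.Icc 1 n, if v j ≤ x then (1:ℝ) else 0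

lemma stepCDF_eq_card (n : ℕ) (v : ℕ → ℝ) (x : ℝ) :
    stepCDF n v x = (n:ℝ)⁻¹ * (((Finset.Icc 1 n).filter (fun i => v i ≤ x)).card : ℝ) := by
  rw [stepCDF, Finset.sum_boole]

lemma quantile_stepCDF {n : ℕ} {v : ℕ → ℝ}
    (hv : ∀ j k, 1 ≤ j → j ≤ k → k ≤ n → v j ≤ v k)
    {j : ℕ} (hj1 : 1 ≤ j) (hjn : j ≤ n) {p : ℝ}
    (hp1 : ((j:ℝ)-1)/n < p) (hp2 : p ≤ (j:ℝ)/n) :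
    quantile (stepCDF n v) p = v j := by
  have hn : 1 ≤ n := le_trans hj1 hjn
  have hn0 : (0:ℝ) < n := by exact_mod_cast hn
  have hset : {x : ℝ | p ≤ stepCDF n v x} = Set.Ici (v j) := by
    ext x
    simp only [Set.mem_setOf_eq, Set.mem_Ici]
    rw [stepCDF_eq_card]
    constructor
    · intro hpx
      by_contra hvx
      push_neg at hvx
      have hsub : (Finset.Icc 1 n).filter (fun i => v i ≤ x) ⊆ Finset.Icc 1 (j-1) := by
        intro i hi
        simp only [Finset.mem_filter, Finset.mem_Icc] at hi ⊢
        refine ⟨hi.1.1, ?_⟩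
        by_contra hij
        push_neg at hij
        have : v j ≤ v i := hv j i hj1 (by omega) hi.1.2
        linarith [hi.2]
      have hcard : ((Finset.Icc 1 n).filter (fun i => v i ≤ x)).card ≤ j - 1 := by
        simpa using Finset.card_le_card hsub
      have h1 : (j:ℝ) - 1 < ((((Finset.Icc 1 n).filter (fun i => v i ≤ x)).card : ℕ) : ℝ) := by
        rw [inv_mul_eq_div, le_div_iff₀ hn0] at hpx
        have := (div_lt_iff₀ hn0).1 hp1
        nlinarith
      have h2 : ((((Finset.Icc 1 n).filter (fun i => v i ≤ x)).card : ℕ) : ℝ) ≤ (j:ℝ) - 1 := by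
        have hc : ((j-1:ℕ):ℝ) = (j:ℝ)-1 := by
          rw [Nat.cast_sub hj1]; norm_num
        rw [← hc]
        exact_mod_cast hcard
      linarith
    · intro hvj
      have hsub : Finset.Icc 1 j ⊆ (Finset.Icc 1 n).filter (fun i => v i ≤ x) := by
        intro i hi
        simp only [Finset.mem_Icc] at hi
        simp only [Finset.mem_filter, Finset.mem_Icc]
        exact ⟨⟨hi.1, le_trans hi.2 hjn⟩, le_trans (hv i j hi.1 hi.2 hjn) hvj⟩
      have hcard : j ≤ ((Finset.Icc 1 n).filter (fun i => v i ≤ x)).card := by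
        simpa using Finset.card_le_card hsub
      have hcard' : (j:ℝ) ≤ (((Finset.Icc 1 n).filter (fun i => v i ≤ x)).card : ℝ) := by
        exact_mod_cast hcard
      rw [inv_mul_eq_div, le_div_iff₀ hn0]
      have := (le_div_iff₀ hn0).1 hp2
      linarith
  rw [quantile, hset, csInf_Ici]

lemma exists_piece {n : ℕ} (hn : 1 ≤ n) {p : ℝ} (hp : p ∈ Set.Ioo (0:ℝ) 1) :
    ∃ j, 1 ≤ j ∧ j ≤ n ∧ ((j:ℝ)-1)/n < p ∧ p ≤ (j:ℝ)/n := by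
  have hn0 : (0:ℝ) < n := by exact_mod_cast hn
  have hnp : (0:ℝ) < (n:ℝ) * p := mul_pos hn0 hp.1
  refine ⟨⌈(n:ℝ)*p⌉₊, ?_, ?_, ?_, ?_⟩
  · exact Nat.ceil_pos.mpr hnp
  · rw [Nat.ceil_le]; nlinarith [hp.2]
  · rw [div_lt_iff₀ hn0]
    have := Nat.ceil_lt_add_one (le_of_lt hnp)
    linarith
  · rw [le_div_iff₀ hn0]
    have := Nat.le_ceil ((n:ℝ)*p)
    linarith

lemma piece_unique {n j k : ℕ} {p : ℝ} (hn0 : (0:ℝ) < n)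
    (h1 : ((j:ℝ)-1)/n < p) (h2 : p ≤ (j:ℝ)/n)
    (h3 : ((k:ℝ)-1)/n < p) (h4 : p ≤ (k:ℝ)/n) : j = k := by
  have a1 : (j:ℝ) - 1 < k := by
    have := lt_of_lt_of_le h1 h4
    rw [div_lt_div_iff₀ hn0 hn0] at this
    nlinarith
  have a2 : (k:ℝ) - 1 < j := by
    have := lt_of_lt_of_le h3 h2
    rw [div_lt_div_iff₀ hn0 hn0] at this
    nlinarith
  have b1 : (j:ℝ) < (k:ℝ) + 1 := by linarith
  have b2 : (k:ℝ) < (j:ℝ) + 1 := by linarith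
  have c1 : j < k + 1 := by exact_mod_cast b1
  have c2 : k < j + 1 := by exact_mod_cast b2
  omega

lemma integral_step {n : ℕ} (hn : 1 ≤ n) {v : ℕ → ℝ}
    (hv : ∀ j k, 1 ≤ j → j ≤ k → k ≤ n → v j ≤ v k)
    {w : ℝ → ℝ} (hw : Continuous w) :
    ∫ p in Set.Ioo (0:ℝ) 1, quantile (stepCDF n v) p * w p
      = ∑ j ∈ Finset.Icc 1 n, v j * (∫ p in (((j:ℝ)-1)/n)..((j:ℝ)/n), w p) := by
  have hn0 : (0:ℝ) < n := by exact_mod_cast hn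
  have hmono : ∀ k : ℕ, ((k:ℕ):ℝ)/n ≤ (((k+1:ℕ)):ℝ)/n := by
    intro k
    apply (div_le_div_iff_of_pos_right hn0).2
    push_cast; linarith
  have hq : ∀ k, k < n → ∀ p ∈ Set.Ioc (((k:ℕ):ℝ)/n) ((((k+1:ℕ)):ℝ)/n),
      quantile (stepCDF n v) p = v (k+1) := by
    intro k hk p hp
    apply quantile_stepCDF hv (by omega) (by omega)
    · have e1 : ((((k+1:ℕ)):ℝ) - 1)/(n:ℝ) = ((k:ℕ):ℝ)/n := by push_cast; ring
      rw [e1]; exact hp.1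
    · exact hp.2
  have hint : ∀ k, k < n → IntervalIntegrable (fun p => quantile (stepCDF n v) p * w p)
      MeasureTheory.volume (((k:ℕ):ℝ)/n) ((((k+1:ℕ)):ℝ)/n) := by
    intro k hk
    rw [intervalIntegrable_iff_integrableOn_Ioc_of_le (hmono k)]
    refine MeasureTheory.IntegrableOn.congr_fun ((hw.integrableOn_Ioc).const_mul (v (k+1))) ?_ measurableSet_Ioc
    intro p hp
    simp only
    rw [hq k hk p hp]
  have step1 : ∫ p in Set.Ioo (0:ℝ) 1, quantile (stepCDF n v) p * w p
      = ∑ k ∈ range n, ∫ p in (((k:ℕ):ℝ)/n)..((((k+1:ℕ)):ℝ)/n), quantile (stepCDF n v) p * w p := by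
    rw [intervalIntegral.sum_integral_adjacent_intervals (a := fun k : ℕ => ((k:ℕ):ℝ)/n) hint]
    norm_num
    rw [div_self (ne_of_gt hn0), intervalIntegral.integral_of_le zero_le_one,
      MeasureTheory.integral_Ioc_eq_integral_Ioo]
  rw [step1, sum_Icc_one]
  apply Finset.sum_congr rfl
  intro k hk
  have hk' : k < n := mem_range.1 hk
  have e1 : ((((k+1:ℕ)):ℝ) - 1)/(n:ℝ) = ((k:ℕ):ℝ)/n := by push_cast; ring
  rw [e1, intervalIntegral.integral_of_le (hmono k), intervalIntegral.integral_of_le (hmono k),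
    MeasureTheory.setIntegral_congr_fun measurableSet_Ioc
      (fun p hp => by simp only; rw [hq k hk' p hp] : Set.EqOn _ (fun p => v (k+1) * w p) _),
    MeasureTheory.integral_const_mul]

end HoeffAux
namespace HoeffAux
open Finset

lemma lambda2_step {n : ℕ} (hn : 1 ≤ n) {v : ℕ → ℝ}
    (hv : ∀ j k, 1 ≤ j → j ≤ k → k ≤ n → v j ≤ v k) :
    lambda2 (stepCDF n v) = ∑ j ∈ Finset.Icc 1 n, v j * ((2*(j:ℝ)-1-n)/(n:ℝ)^2) := by
  have hn0 : (n:ℝ) ≠ 0 := by positivity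
  rw [lambda2, integral_step hn hv (by continuity)]
  apply Finset.sum_congr rfl
  intro j hj
  rw [intW1]
  congr 1
  field_simp
  ring

lemma lambda3_step {n : ℕ} (hn : 1 ≤ n) {v : ℕ → ℝ}
    (hv : ∀ j k, 1 ≤ j → j ≤ k → k ≤ n → v j ≤ v k) :
    lambda3 (stepCDF n v) = ∑ j ∈ Finset.Icc 1 n,
      v j * ((6*(j:ℝ)^2 - 6*j + 2 - (6*(j:ℝ)-3)*n + (n:ℝ)^2)/(n:ℝ)^3) := by
  have hn0 : (n:ℝ) ≠ 0 := by positivity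
  rw [lambda3, integral_step hn hv (by continuity)]
  apply Finset.sum_congr rfl
  intro j hj
  rw [intW2]
  congr 1
  field_simp
  ring

lemma lambda4_step {n : ℕ} (hn : 1 ≤ n) {v : ℕ → ℝ}
    (hv : ∀ j k, 1 ≤ j → j ≤ k → k ≤ n → v j ≤ v k) :
    lambda4 (stepCDF n v) = ∑ j ∈ Finset.Icc 1 n,
      v j * ((20*(j:ℝ)^3 - 30*(j:ℝ)^2 + 20*(j:ℝ) - 5
        - (30*(j:ℝ)^2 - 30*(j:ℝ) + 10)*n + (12*(j:ℝ)-6)*(n:ℝ)^2 - (n:ℝ)^3)/(n:ℝ)^4) := by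
  have hn0 : (n:ℝ) ≠ 0 := by positivity
  rw [lambda4, integral_step hn hv (by continuity)]
  apply Finset.sum_congr rfl
  intro j hj
  rw [intW3]
  congr 1
  field_simp
  ring

lemma sum_coeff2_zero (n : ℕ) : ∑ j ∈ Finset.Icc 1 n, (2*(j:ℝ)-1-n) = 0 := by
  induction n with
  | zero => simp
  | succ n ih =>
    rw [Finset.sum_Icc_succ_top (by omega : 1 ≤ n+1)]
    have e : ∀ j : ℕ, (2*(j:ℝ)-1-((n+1:ℕ):ℝ)) = (2*(j:ℝ)-1-(n:ℝ)) - 1 := by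
      intro j; push_cast; ring
    rw [Finset.sum_congr rfl (fun j _ => e j), Finset.sum_sub_distrib, ih,
      Finset.sum_const, Nat.card_Icc]
    push_cast
    ring

lemma quantile_step_monoOn {n : ℕ} (hn : 1 ≤ n) {v : ℕ → ℝ}
    (hv : ∀ j k, 1 ≤ j → j ≤ k → k ≤ n → v j ≤ v k) :
    MonotoneOn (quantile (stepCDF n v)) (Set.Ioo (0:ℝ) 1) := by
  have hn0 : (0:ℝ) < n := by exact_mod_cast hn
  intro p hp p' hp' hpp'
  obtain ⟨j, hj1, hjn, hja, hjb⟩ := exists_piece hn hp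
  obtain ⟨k, hk1, hkn, hka, hkb⟩ := exists_piece hn hp'
  rw [quantile_stepCDF hv hj1 hjn hja hjb, quantile_stepCDF hv hk1 hkn hka hkb]
  apply hv j k hj1 ?_ hkn
  have : ((j:ℝ)-1)/n < (k:ℝ)/n := lt_of_lt_of_le hja (le_trans hpp' hkb)
  rw [div_lt_div_iff₀ hn0 hn0] at this
  have h2 : (j:ℝ) < (k:ℝ)+1 := by nlinarith
  have : j < k+1 := by exact_mod_cast h2
  omega

lemma hasFiniteMean_step {n : ℕ} (hn : 1 ≤ n) {v : ℕ → ℝ}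
    (hv : ∀ j k, 1 ≤ j → j ≤ k → k ≤ n → v j ≤ v k) :
    HasFiniteMean (stepCDF n v) := by
  unfold HasFiniteMean
  have hn0 : (0:ℝ) < n := by exact_mod_cast hn
  set g : ℝ → ℝ := fun p => ∑ j ∈ Finset.Icc 1 n,
      (Set.Ioc (((j:ℝ)-1)/n) ((j:ℝ)/n)).indicator (fun _ => v j) p with hg
  have hgint : MeasureTheory.IntegrableOn g (Set.Ioo (0:ℝ) 1) := by
    apply MeasureTheory.integrable_finset_sum
    intro j hj
    exact (MeasureTheory.integrableOn_const (by simp) (by simp)).indicator measurableSet_Ioc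
  apply MeasureTheory.IntegrableOn.congr_fun hgint ?_ measurableSet_Ioo
  intro p hp
  obtain ⟨j, hj1, hjn, hja, hjb⟩ := exists_piece hn hp
  simp only
  rw [quantile_stepCDF hv hj1 hjn hja hjb, hg]
  beta_reduce
  rw [Finset.sum_eq_single j]
  · rw [Set.indicator_of_mem (Set.mem_Ioc.2 ⟨hja, hjb⟩)]
  · intro k hk hkj
    apply Set.indicator_of_notMem
    intro hmem
    exact hkj (piece_unique hn0 hmem.1 hmem.2 hja hjb)
  · intro hj; exact absurd (Finset.mem_Icc.2 ⟨hj1, hjn⟩) hj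

lemma lambda2_step_pos {n : ℕ} (hn : 2 ≤ n) {v : ℕ → ℝ}
    (hv : ∀ j k, 1 ≤ j → j ≤ k → k ≤ n → v j ≤ v k)
    (hne : ∃ a b, 1 ≤ a ∧ a ≤ n ∧ 1 ≤ b ∧ b ≤ n ∧ v a ≠ v b) :
    0 < lambda2 (stepCDF n v) := by
  have hn1 : 1 ≤ n := by omega
  have hn0 : (0:ℝ) < n := by exact_mod_cast hn1
  rw [lambda2_step hn1 hv]
  set j0 : ℕ := (n+2)/2 with hj0
  have hj01 : 1 ≤ j0 := by omega
  have hj0n : j0 ≤ n := by omega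
  set t : ℝ := v j0 with ht
  have hsplit : ∑ j ∈ Finset.Icc 1 n, v j * ((2*(j:ℝ)-1-n)/(n:ℝ)^2)
      = ∑ j ∈ Finset.Icc 1 n, (v j - t) * ((2*(j:ℝ)-1-n)/(n:ℝ)^2) := by
    rw [← sub_eq_zero]
    have : ∑ j ∈ Finset.Icc 1 n, v j * ((2*(j:ℝ)-1-n)/(n:ℝ)^2)
        - ∑ j ∈ Finset.Icc 1 n, (v j - t) * ((2*(j:ℝ)-1-n)/(n:ℝ)^2)
        = t * ((∑ j ∈ Finset.Icc 1 n, (2*(j:ℝ)-1-n))/(n:ℝ)^2) := by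
      rw [← Finset.sum_sub_distrib, Finset.sum_div, Finset.mul_sum]
      apply Finset.sum_congr rfl
      intro j hj
      ring
    rw [this, sum_coeff2_zero]
    simp
  rw [hsplit]
  have hterm : ∀ j ∈ Finset.Icc 1 n, 0 ≤ (v j - t) * ((2*(j:ℝ)-1-n)/(n:ℝ)^2) := by
    intro j hj
    obtain ⟨h1, h2⟩ := Finset.mem_Icc.1 hj
    rcases le_or_gt j0 j with hc | hc
    · apply mul_nonneg (sub_nonneg.2 (hv j0 j hj01 hc h2))
      apply div_nonneg ?_ (by positivity)
      have : (n:ℝ) + 1 ≤ 2*(j:ℝ) := by exact_mod_cast (by omega : n + 1 ≤ 2*j)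
      linarith
    · rw [← neg_mul_neg]
      apply mul_nonneg (neg_nonneg.2 (sub_nonpos.2 (hv j j0 h1 (by omega) hj0n)))
      rw [neg_nonneg]
      apply div_nonpos_of_nonpos_of_nonneg ?_ (by positivity)
      have : 2*(j:ℝ) ≤ (n:ℝ) := by exact_mod_cast (by omega : 2*j ≤ n)
      linarith
  -- strict positivity at one index
  obtain ⟨a, b, ha1, han, hb1, hbn, hab⟩ := hne
  have h1n : v 1 < v n := by
    rcases lt_or_ge (v 1) (v n) with h | h
    · exact h
    · exfalso
      have e : ∀ c, 1 ≤ c → c ≤ n → v c = v 1 := by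
        intro c hc1 hcn
        have l1 := hv 1 c (le_refl 1) hc1 hcn
        have l2 := hv c n hc1 hcn (le_refl n)
        linarith [l1, l2, h]
      exact hab ((e a ha1 han).trans (e b hb1 hbn).symm)
  have hstrict : ∃ j1, j1 ∈ Finset.Icc 1 n ∧ 0 < (v j1 - t) * ((2*(j1:ℝ)-1-n)/(n:ℝ)^2) := by
    rcases lt_or_ge t (v n) with h | h
    · refine ⟨n, Finset.mem_Icc.2 ⟨hn1, le_refl n⟩, ?_⟩
      apply mul_pos (by linarith)
      apply div_pos ?_ (by positivity)
      have : (2:ℝ) ≤ (n:ℝ) := by exact_mod_cast hn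
      linarith
    · have htn : t = v n := le_antisymm (hv j0 n hj01 hj0n (le_refl n)) h
      refine ⟨1, Finset.mem_Icc.2 ⟨le_refl 1, hn1⟩, ?_⟩
      apply mul_pos_of_neg_of_neg
      · rw [htn]; linarith
      · apply div_neg_of_neg_of_pos ?_ (by positivity)
        have : (2:ℝ) ≤ (n:ℝ) := by exact_mod_cast hn
        norm_num
        linarith
  obtain ⟨j1, hj1mem, hj1pos⟩ := hstrict
  calc (0:ℝ) < (v j1 - t) * ((2*(j1:ℝ)-1-n)/(n:ℝ)^2) := hj1pos
    _ ≤ ∑ j ∈ Finset.Icc 1 n, (v j - t) * ((2*(j:ℝ)-1-n)/(n:ℝ)^2) :=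
        Finset.single_le_sum hterm hj1mem

end HoeffAux
namespace HoeffAux
open Finset MeasureTheory

lemma betaDens_cont (m j : ℕ) : Continuous (betaDens m j) := by
  unfold betaDens; continuity

lemma integrable_mul_beta {G : ℝ → ℝ}
    (hInt : IntegrableOn (quantile G) (Set.Ioo (0:ℝ) 1)) (m j : ℕ) :
    IntegrableOn (fun u => quantile G u * betaDens m j u) (Set.Ioo (0:ℝ) 1) := by
  have hb : ∀ᵐ u ∂(volume.restrict (Set.Ioo (0:ℝ) 1)),
      ‖betaDens m j u‖ ≤ ((m:ℝ) * ((m-1).choose (j-1) : ℝ)) := by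
    rw [ae_restrict_iff' measurableSet_Ioo]
    apply ae_of_all
    intro u hu
    have h0u : (0:ℝ) ≤ u := le_of_lt hu.1
    have h1u : (0:ℝ) ≤ 1 - u := by linarith [hu.2]
    rw [Real.norm_eq_abs, betaDens, abs_of_nonneg (by positivity)]
    calc (m:ℝ) * ((m-1).choose (j-1) : ℝ) * u^(j-1) * (1-u)^(m-j)
        ≤ (m:ℝ) * ((m-1).choose (j-1) : ℝ) * 1 * 1 := by
          gcongr
          · exact pow_le_one₀ h0u (by linarith [hu.2])
          · exact pow_le_one₀ h1u (by linarith [hu.1])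
      _ = (m:ℝ) * ((m-1).choose (j-1) : ℝ) := by ring
  have h := Integrable.bdd_mul (μ := volume.restrict (Set.Ioo (0:ℝ) 1))
    hInt ((betaDens_cont m j).aestronglyMeasurable) hb
  have e : (fun u => quantile G u * betaDens m j u)
      = fun u => betaDens m j u * quantile G u := by funext u; ring
  rw [e]; exact h

lemma hasDeriv_delta {m j : ℕ} (hj1 : 1 ≤ j) (hjm : j < m) (u : ℝ) :
    HasDerivAt (fun u : ℝ => -((m.choose j : ℝ) * (u^j * (1-u)^(m-j))))
      (betaDens m (j+1) u - betaDens m j u) u := by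
  have h1 : HasDerivAt (fun u : ℝ => (1:ℝ)-u) (-1) u := (hasDerivAt_id u).const_sub 1
  have h2 : HasDerivAt (fun u : ℝ => ((1:ℝ)-u)^(m-j))
      (((m-j:ℕ):ℝ) * (1-u)^(m-j-1) * (-1)) u := h1.pow (m-j)
  have h3 : HasDerivAt (fun u : ℝ => u^j) ((j:ℝ) * u^(j-1)) u := by
    simpa using hasDerivAt_pow j u
  have h5 := ((h3.mul h2).const_mul ((m.choose j : ℝ))).neg
  refine h5.congr_deriv (Eq.symm ?_)
  obtain ⟨j', rfl⟩ : ∃ j', j = j'+1 := ⟨j-1, by omega⟩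
  obtain ⟨t, rfl⟩ : ∃ t, m = j'+t+2 := ⟨m-j'-2, by omega⟩
  have e1R : ((j':ℝ)+1) * ((j'+t+2).choose (j'+1) : ℝ)
      = ((j':ℝ)+(t:ℝ)+2) * ((j'+t+1).choose j' : ℝ) := by
    have h := Nat.add_one_mul_choose_eq (j'+t+1) j'
    simp only [Nat.succ_eq_add_one, show j'+t+1+1 = j'+t+2 by omega] at h
    have hR : ((j':ℝ)+(t:ℝ)+2) * ((j'+t+1).choose j' : ℝ)
        = ((j'+t+2).choose (j'+1) : ℝ) * ((j':ℝ)+1) := by exact_mod_cast h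
    linear_combination -hR
  have e2R : ((t:ℝ)+1) * ((j'+t+2).choose (j'+1) : ℝ)
      = ((j':ℝ)+(t:ℝ)+2) * ((j'+t+1).choose (j'+1) : ℝ) := by
    have h := Nat.choose_mul_succ_eq (j'+t+1) (j'+1)
    simp only [show j'+t+1+1 = j'+t+2 by omega, show j'+t+2-(j'+1) = t+1 by omega] at h
    have hR : ((j'+t+1).choose (j'+1) : ℝ) * ((j':ℝ)+(t:ℝ)+2)
        = ((j'+t+2).choose (j'+1) : ℝ) * ((t:ℝ)+1) := by exact_mod_cast h
    linear_combination -hR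
  unfold betaDens
  simp only [show j'+1+1-1 = j'+1 by omega, show j'+t+2-(j'+1+1) = t by omega,
    show j'+t+2-1 = j'+t+1 by omega, show j'+1-1 = j' by omega,
    show j'+t+2-(j'+1) = t+1 by omega, show t+1-1 = t by omega]
  push_cast
  linear_combination (u^j' * (1-u)^(t+1)) * e1R - (u^(j'+1)*(1-u)^t) * e2R

lemma intDelta {m j : ℕ} (hj1 : 1 ≤ j) (hjm : j < m) :
    ∫ u in Set.Ioo (0:ℝ) 1, (betaDens m (j+1) u - betaDens m j u) = 0 := by
  have hcont : Continuous (fun u => betaDens m (j+1) u - betaDens m j u) :=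
    (betaDens_cont m (j+1)).sub (betaDens_cont m j)
  rw [← integral_Ioc_eq_integral_Ioo, ← intervalIntegral.integral_of_le zero_le_one,
    intervalIntegral.integral_eq_sub_of_hasDerivAt (fun x _ => hasDeriv_delta hj1 hjm x)
      (hcont.intervalIntegrable 0 1)]
  rw [show (1:ℝ)-1 = 0 by ring, show (1:ℝ)-0 = 1 by ring,
    zero_pow (show m - j ≠ 0 by omega), zero_pow (show j ≠ 0 by omega)]
  ring

lemma delta_factor {m j : ℕ} (hj1 : 1 ≤ j) (hjm : j < m) :
    ∃ c ∈ Set.Ioo (0:ℝ) 1,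
      (∀ u ∈ Set.Ioo (0:ℝ) 1, u ≤ c → betaDens m (j+1) u - betaDens m j u ≤ 0) ∧
      (∀ u ∈ Set.Ioo (0:ℝ) 1, c ≤ u → 0 ≤ betaDens m (j+1) u - betaDens m j u) := by
  obtain ⟨j', rfl⟩ : ∃ j', j = j'+1 := ⟨j-1, by omega⟩
  obtain ⟨t, rfl⟩ : ∃ t, m = j'+t+2 := ⟨m-j'-2, by omega⟩
  set a : ℝ := ((j'+t+1).choose j' : ℝ) with hadef
  set b : ℝ := ((j'+t+1).choose (j'+1) : ℝ) with hbdef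
  have ha : 0 < a := by
    rw [hadef]
    have : 0 < (j'+t+1).choose j' := Nat.choose_pos (by omega)
    exact_mod_cast this
  have hb : 0 < b := by
    rw [hbdef]
    have : 0 < (j'+t+1).choose (j'+1) := Nat.choose_pos (by omega)
    exact_mod_cast this
  have hab : 0 < a + b := by linarith
  have hfac : ∀ u : ℝ, betaDens (j'+t+2) (j'+1+1) u - betaDens (j'+t+2) (j'+1) u
      = ((j'+t+2:ℕ):ℝ) * u^j' * (1-u)^t * ((a+b)*u - a) := by
    intro u
    rw [betaDens, betaDens]
    simp only [show j'+1+1-1 = j'+1 by omega, show j'+t+2-(j'+1+1) = t by omega,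
      show j'+t+2-1 = j'+t+1 by omega, show j'+1-1 = j' by omega,
      show j'+t+2-(j'+1) = t+1 by omega]
    rw [← hadef, ← hbdef]
    ring
  refine ⟨a/(a+b), ⟨by positivity, by rw [div_lt_one hab]; linarith⟩, ?_, ?_⟩
  · intro u hu hc
    rw [hfac]
    have hsign : (a+b)*u - a ≤ 0 := by
      rw [sub_nonpos]
      calc (a+b)*u ≤ (a+b)*(a/(a+b)) := mul_le_mul_of_nonneg_left hc (le_of_lt hab)
        _ = a := by field_simp
    apply mul_nonpos_of_nonneg_of_nonpos ?_ hsign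
    have h0u : (0:ℝ) ≤ u := le_of_lt hu.1
    have h1u : (0:ℝ) ≤ 1 - u := by linarith [hu.2]
    positivity
  · intro u hu hc
    rw [hfac]
    have hsign : 0 ≤ (a+b)*u - a := by
      rw [sub_nonneg]
      calc a = (a+b)*(a/(a+b)) := by field_simp
        _ ≤ (a+b)*u := mul_le_mul_of_nonneg_left hc (le_of_lt hab)
    apply mul_nonneg ?_ hsign
    have h0u : (0:ℝ) ≤ u := le_of_lt hu.1
    have h1u : (0:ℝ) ≤ 1 - u := by linarith [hu.2]
    positivity

lemma muOS_mono {m : ℕ} {G : ℝ → ℝ} (hq : MonotoneOn (quantile G) (Set.Ioo 0 1))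
    (hInt : IntegrableOn (quantile G) (Set.Ioo (0:ℝ) 1))
    {j : ℕ} (hj1 : 1 ≤ j) (hjm : j < m) : muOS m j G ≤ muOS m (j+1) G := by
  obtain ⟨c, hc, hneg, hpos⟩ := delta_factor hj1 hjm
  set t0 : ℝ := quantile G c with ht0
  have hint1 := integrable_mul_beta hInt m (j+1)
  have hint2 := integrable_mul_beta hInt m j
  have hqd : IntegrableOn (fun u => quantile G u *
      (betaDens m (j+1) u - betaDens m j u)) (Set.Ioo (0:ℝ) 1) := by
    have h := hint1.sub hint2
    have e : (fun u => quantile G u * (betaDens m (j+1) u - betaDens m j u))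
        = fun u => quantile G u * betaDens m (j+1) u - quantile G u * betaDens m j u := by
      funext u; ring
    rw [e]; exact h
  have htd : IntegrableOn (fun u => t0 *
      (betaDens m (j+1) u - betaDens m j u)) (Set.Ioo (0:ℝ) 1) := by
    apply Integrable.const_mul
    exact (((betaDens_cont m (j+1)).sub (betaDens_cont m j)).integrableOn_Ioc).mono_set
      Set.Ioo_subset_Ioc_self
  have h3 : 0 ≤ ∫ u in Set.Ioo (0:ℝ) 1,
      (quantile G u - t0) * (betaDens m (j+1) u - betaDens m j u) := by
    apply setIntegral_nonneg measurableSet_Ioo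
    intro u hu
    rcases le_total u c with h | h
    · rw [← neg_mul_neg]
      apply mul_nonneg (by rw [neg_nonneg]; exact sub_nonpos.2 (hq hu hc h))
      rw [neg_nonneg]; exact hneg u hu h
    · exact mul_nonneg (sub_nonneg.2 (hq hc hu h)) (hpos u hu h)
  have h4 : ∫ u in Set.Ioo (0:ℝ) 1,
      (quantile G u - t0) * (betaDens m (j+1) u - betaDens m j u)
      = (∫ u in Set.Ioo (0:ℝ) 1, quantile G u * (betaDens m (j+1) u - betaDens m j u))
        - ∫ u in Set.Ioo (0:ℝ) 1, t0 * (betaDens m (j+1) u - betaDens m j u) := by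
    rw [← integral_sub hqd htd]
    congr 1; funext u; ring
  have h5 : ∫ u in Set.Ioo (0:ℝ) 1, t0 * (betaDens m (j+1) u - betaDens m j u) = 0 := by
    rw [integral_const_mul, intDelta hj1 hjm, mul_zero]
  have h6 : ∫ u in Set.Ioo (0:ℝ) 1, quantile G u * (betaDens m (j+1) u - betaDens m j u)
      = muOS m (j+1) G - muOS m j G := by
    rw [muOS, muOS, ← integral_sub hint1 hint2]
    congr 1; funext u; ring
  rw [h4, h5, h6] at h3
  linarith

lemma muOS_mono' {m : ℕ} {G : ℝ → ℝ} (hq : MonotoneOn (quantile G) (Set.Ioo 0 1))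
    (hInt : IntegrableOn (quantile G) (Set.Ioo (0:ℝ) 1)) :
    ∀ j k, 1 ≤ j → j ≤ k → k ≤ m → muOS m j G ≤ muOS m k G := by
  intro j k hj1 hjk hkm
  induction k, hjk using Nat.le_induction with
  | base => exact le_refl _
  | succ k hk ih =>
    exact le_trans (ih (by omega)) (muOS_mono hq hInt (by omega) (by omega))

end HoeffAux
namespace HoeffAux
open Finset MeasureTheory

lemma integrable_q_w {G : ℝ → ℝ} (hInt : IntegrableOn (quantile G) (Set.Ioo (0:ℝ) 1))
    {w : ℝ → ℝ} (hw : Continuous w) :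
    IntegrableOn (fun u => quantile G u * w u) (Set.Ioo (0:ℝ) 1) := by
  obtain ⟨C, hC⟩ := (isCompact_Icc (a := (0:ℝ)) (b := 1)).exists_bound_of_continuousOn
    hw.continuousOn
  have hb : ∀ᵐ u ∂(volume.restrict (Set.Ioo (0:ℝ) 1)), ‖w u‖ ≤ C := by
    rw [ae_restrict_iff' measurableSet_Ioo]
    exact ae_of_all _ (fun u hu => hC u ⟨le_of_lt hu.1, le_of_lt hu.2⟩)
  have h := Integrable.bdd_mul (μ := volume.restrict (Set.Ioo (0:ℝ) 1))
    hInt hw.aestronglyMeasurable hb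
  have e : (fun u => quantile G u * w u) = fun u => w u * quantile G u := by
    funext u; ring
  rw [e]; exact h

lemma hoeff_eq_step (m : ℕ) (G : ℝ → ℝ) :
    hoeffCDF m G = stepCDF m (fun j => muOS m j G) := rfl

section lambdas

variable {m : ℕ} {G : ℝ → ℝ}

lemma lambda_hoeff_gen (hm : 1 ≤ m)
    (hq : MonotoneOn (quantile G) (Set.Ioo 0 1))
    (hInt : IntegrableOn (quantile G) (Set.Ioo (0:ℝ) 1))
    (c : ℕ → ℝ) (T : ℝ → ℝ) (hT : Continuous T)
    (hkey : ∀ u : ℝ, ∑ j ∈ Finset.Icc 1 m, c j * betaDens m j u = T u) :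
    ∑ j ∈ Finset.Icc 1 m, muOS m j G * c j
      = ∫ u in Set.Ioo (0:ℝ) 1, quantile G u * T u := by
  have e1 : ∀ j ∈ Finset.Icc 1 m, muOS m j G * c j
      = ∫ u in Set.Ioo (0:ℝ) 1, c j * (quantile G u * betaDens m j u) := by
    intro j hj
    rw [integral_const_mul, muOS, mul_comm]
  rw [Finset.sum_congr rfl e1, ← integral_finset_sum]
  · apply setIntegral_congr_fun measurableSet_Ioo
    intro u hu
    simp only
    rw [← hkey u, Finset.mul_sum]
    apply Finset.sum_congr rfl
    intro j hj
    ring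
  · intro j hj
    exact (integrable_mul_beta hInt m j).const_mul _

lemma lambda2_hoeff (hm : 1 ≤ m)
    (hq : MonotoneOn (quantile G) (Set.Ioo 0 1))
    (hInt : IntegrableOn (quantile G) (Set.Ioo (0:ℝ) 1)) :
    lambda2 (hoeffCDF m G) = ((m:ℝ)-1)/m * lambda2 G := by
  have hv := muOS_mono' (m := m) hq hInt
  rw [hoeff_eq_step, lambda2_step hm hv,
    lambda_hoeff_gen hm hq hInt _ (fun u => ((m:ℝ)-1)/m * (2*u-1)) (by continuity)
      (fun u => key2 hm u)]
  have e : (fun u => quantile G u * (((m:ℝ)-1)/m * (2*u-1)))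
      = fun u => ((m:ℝ)-1)/m * (quantile G u * (2*u-1)) := by funext u; ring
  rw [e, integral_const_mul, lambda2]

lemma lambda3_hoeff (hm : 1 ≤ m)
    (hq : MonotoneOn (quantile G) (Set.Ioo 0 1))
    (hInt : IntegrableOn (quantile G) (Set.Ioo (0:ℝ) 1)) :
    lambda3 (hoeffCDF m G) = ((m:ℝ)-1)*((m:ℝ)-2)/(m:ℝ)^2 * lambda3 G := by
  have hv := muOS_mono' (m := m) hq hInt
  rw [hoeff_eq_step, lambda3_step hm hv,
    lambda_hoeff_gen hm hq hInt _ (fun u => ((m:ℝ)-1)*((m:ℝ)-2)/(m:ℝ)^2 * (6*u^2-6*u+1))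
      (by continuity) (fun u => key3 hm u)]
  have e : (fun u => quantile G u * (((m:ℝ)-1)*((m:ℝ)-2)/(m:ℝ)^2 * (6*u^2-6*u+1)))
      = fun u => ((m:ℝ)-1)*((m:ℝ)-2)/(m:ℝ)^2 * (quantile G u * (6*u^2-6*u+1)) := by
    funext u; ring
  rw [e, integral_const_mul, lambda3]

lemma lambda4_hoeff (hm : 1 ≤ m)
    (hq : MonotoneOn (quantile G) (Set.Ioo 0 1))
    (hInt : IntegrableOn (quantile G) (Set.Ioo (0:ℝ) 1)) :
    lambda4 (hoeffCDF m G) = ((m:ℝ)-1)*((m:ℝ)-2)*((m:ℝ)-3)/(m:ℝ)^3 * lambda4 G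
      - ((m:ℝ)-1)/(m:ℝ)^3 * lambda2 G := by
  have hv := muOS_mono' (m := m) hq hInt
  rw [hoeff_eq_step, lambda4_step hm hv,
    lambda_hoeff_gen hm hq hInt _
      (fun u => ((m:ℝ)-1)*((m:ℝ)-2)*((m:ℝ)-3)/(m:ℝ)^3 * (20*u^3-30*u^2+12*u-1)
        - ((m:ℝ)-1)/(m:ℝ)^3 * (2*u-1))
      (by continuity) (fun u => key4 hm u)]
  have e : (fun u => quantile G u * (((m:ℝ)-1)*((m:ℝ)-2)*((m:ℝ)-3)/(m:ℝ)^3 * (20*u^3-30*u^2+12*u-1)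
        - ((m:ℝ)-1)/(m:ℝ)^3 * (2*u-1)))
      = fun u => ((m:ℝ)-1)*((m:ℝ)-2)*((m:ℝ)-3)/(m:ℝ)^3 * (quantile G u * (20*u^3-30*u^2+12*u-1))
        - ((m:ℝ)-1)/(m:ℝ)^3 * (quantile G u * (2*u-1)) := by
    funext u; ring
  rw [e, integral_sub, integral_const_mul, integral_const_mul, lambda4, lambda2]
  · exact (integrable_q_w hInt (by continuity)).const_mul _
  · exact (integrable_q_w hInt (by continuity)).const_mul _

lemma master (hm : 2 ≤ m)
    (hq : MonotoneOn (quantile G) (Set.Ioo 0 1))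
    (hInt : IntegrableOn (quantile G) (Set.Ioo (0:ℝ) 1))
    (hl2 : lambda2 G ≠ 0) :
    (lambda3 (hoeffCDF m G) / lambda2 (hoeffCDF m G)
        = (((m : ℝ) - 2) / m) * (lambda3 G / lambda2 G)) ∧
    (lambda4 (hoeffCDF m G) / lambda2 (hoeffCDF m G)
        = ((((m : ℝ) - 2) * ((m : ℝ) - 3)) / (m : ℝ) ^ 2) * (lambda4 G / lambda2 G)
            - 1 / (m : ℝ) ^ 2) := by
  have hm1 : 1 ≤ m := by omega
  have hm2R : (2:ℝ) ≤ (m:ℝ) := by exact_mod_cast hm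
  have hm0 : (m:ℝ) ≠ 0 := by linarith
  have hm1R : (m:ℝ) - 1 ≠ 0 := by linarith
  rw [lambda2_hoeff hm1 hq hInt, lambda3_hoeff hm1 hq hInt, lambda4_hoeff hm1 hq hInt]
  constructor
  · field_simp
  · field_simp

end lambdas

lemma isCDF_quantile_monoOn {G : ℝ → ℝ} (hG : IsCDF G) :
    MonotoneOn (quantile G) (Set.Ioo 0 1) := by
  have hne : ∀ p : ℝ, p < 1 → {x : ℝ | p ≤ G x}.Nonempty := by
    intro p hp
    obtain ⟨x, hx⟩ := (hG.tendsto_atTop.eventually (eventually_ge_nhds hp)).exists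
    exact ⟨x, hx⟩
  have hbdd : ∀ p : ℝ, 0 < p → BddBelow {x : ℝ | p ≤ G x} := by
    intro p hp
    obtain ⟨x₀, hx₀⟩ := (hG.tendsto_atBot.eventually (eventually_lt_nhds hp)).exists
    refine ⟨x₀, fun y hy => ?_⟩
    by_contra hlt
    push_neg at hlt
    have := hG.mono (le_of_lt hlt)
    exact absurd hy (by simp only [Set.mem_setOf_eq]; push_neg; linarith)
  intro p hp q hq hpq
  apply csInf_le_csInf (hbdd p hp.1) (hne q hq.2)
  intro x hx
  exact le_trans hpq hx

end HoeffAux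
namespace HoeffAux
open Finset MeasureTheory

lemma list_sum_getD (l : List ℝ) (g : ℝ → ℝ) :
    (l.map g).sum = ∑ k ∈ range l.length, g (l.getD k 0) := by
  induction l with
  | nil => simp
  | cons a l ih =>
    rw [List.map_cons, List.sum_cons, List.length_cons, Finset.sum_range_succ']
    simp only [List.getD_cons_succ, List.getD_cons_zero]
    rw [← ih]
    ring

lemma ecdf_sort (n : ℕ) (x : ℕ → ℝ) :
    ∃ v : ℕ → ℝ, (∀ j k, 1 ≤ j → j ≤ k → k ≤ n → v j ≤ v k) ∧
      ecdf n x = stepCDF n v ∧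
      (∀ i, i < n → ∃ j, 1 ≤ j ∧ j ≤ n ∧ v j = x i) := by
  classical
  set l0 : List ℝ := List.ofFn (fun i : Fin n => x i) with hl0
  set l : List ℝ := Multiset.sort (↑l0) (· ≤ ·) with hl
  have hperm : l.Perm l0 := by
    rw [← Multiset.coe_eq_coe]
    exact Multiset.sort_eq _ _
  have hlen : l.length = n := by rw [hperm.length_eq, hl0, List.length_ofFn]
  have hsorted : l.Pairwise (· ≤ ·) := Multiset.pairwise_sort _ _
  refine ⟨fun j => l.getD (j-1) 0, ?_, ?_, ?_⟩
  · intro j k hj hjk hkn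
    rcases eq_or_lt_of_le hjk with rfl | hlt
    · exact le_refl _
    · have hj' : j - 1 < l.length := by omega
      have hk' : k - 1 < l.length := by omega
      simp only [List.getD_eq_getElem l 0 hj', List.getD_eq_getElem l 0 hk']
      have := hsorted.rel_get_of_lt (a := ⟨j-1, hj'⟩) (b := ⟨k-1, hk'⟩)
        (by rw [Fin.lt_def]; simp; omega)
      simpa using this
  · funext t
    rw [ecdf, stepCDF]
    congr 1
    have h1 : ∑ i ∈ range n, (if x i ≤ t then (1:ℝ) else 0)
        = (l0.map (fun a => if a ≤ t then (1:ℝ) else 0)).sum := by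
      rw [hl0, List.map_ofFn, List.sum_ofFn, ← Fin.sum_univ_eq_sum_range]
      rfl
    have h2 : (l0.map (fun a => if a ≤ t then (1:ℝ) else 0)).sum
        = (l.map (fun a => if a ≤ t then (1:ℝ) else 0)).sum :=
      ((hperm.map _).sum_eq).symm
    rw [h1, h2, list_sum_getD, hlen, sum_Icc_one]
    simp only [Nat.add_sub_cancel]
  · intro i hi
    have hmem : x i ∈ l := by
      rw [hperm.mem_iff, hl0]
      rw [List.mem_ofFn]
      exact ⟨⟨i, hi⟩, rfl⟩
    obtain ⟨k, hk, hkx⟩ := List.mem_iff_getElem.1 hmem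
    refine ⟨k+1, by omega, by omega, ?_⟩
    simp only [Nat.add_sub_cancel]
    rw [List.getD_eq_getElem l 0 hk]
    exact hkx

end HoeffAux

/-- Transformation of L-skewness and L-kurtosis under the Hoeffding operator;
in particular for the empirical CDF of a non-degenerate sample. -/
theorem hoeffCDF_Lskewness_Lkurtosis
    (m : ℕ) (hm : 2 ≤ m) (G : ℝ → ℝ) (hG : IsCDF G) (hGmean : HasFiniteMean G)
    (hl2 : lambda2 G ≠ 0) :
    (lambda3 (hoeffCDF m G) / lambda2 (hoeffCDF m G)
        = (((m : ℝ) - 2) / m) * (lambda3 G / lambda2 G)) ∧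
    (lambda4 (hoeffCDF m G) / lambda2 (hoeffCDF m G)
        = ((((m : ℝ) - 2) * ((m : ℝ) - 3)) / (m : ℝ) ^ 2) * (lambda4 G / lambda2 G)
            - 1 / (m : ℝ) ^ 2) ∧
    (∀ n : ℕ, ∀ x : ℕ → ℝ, (∃ i < n, ∃ j < n, x i ≠ x j) →
      (lambda3 (hoeffCDF m (ecdf n x)) / lambda2 (hoeffCDF m (ecdf n x))
          = (((m : ℝ) - 2) / m) * (lambda3 (ecdf n x) / lambda2 (ecdf n x))) ∧
      (lambda4 (hoeffCDF m (ecdf n x)) / lambda2 (hoeffCDF m (ecdf n x))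
          = ((((m : ℝ) - 2) * ((m : ℝ) - 3)) / (m : ℝ) ^ 2)
              * (lambda4 (ecdf n x) / lambda2 (ecdf n x)) - 1 / (m : ℝ) ^ 2)) := by
  have hq := HoeffAux.isCDF_quantile_monoOn hG
  obtain ⟨h3, h4⟩ := HoeffAux.master hm hq hGmean hl2
  refine ⟨h3, h4, ?_⟩
  rintro n x ⟨i, hi, j, hj, hij⟩
  obtain ⟨v, hv, hecdf, hmem⟩ := HoeffAux.ecdf_sort n x
  have hn2 : 2 ≤ n := by
    by_contra h'
    push_neg at h'
    have : i = j := by omega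
    rw [this] at hij
    exact hij rfl
  have hne : ∃ a b, 1 ≤ a ∧ a ≤ n ∧ 1 ≤ b ∧ b ≤ n ∧ v a ≠ v b := by
    obtain ⟨a, ha1, han, hva⟩ := hmem i hi
    obtain ⟨b, hb1, hbn, hvb⟩ := hmem j hj
    exact ⟨a, b, ha1, han, hb1, hbn, by rw [hva, hvb]; exact hij⟩
  have hn1 : 1 ≤ n := by omega
  rw [hecdf]
  exact HoeffAux.master hm (HoeffAux.quantile_step_monoOn hn1 hv)
    (HoeffAux.hasFiniteMean_step hn1 hv)
    (HoeffAux.lambda2_step_pos hn2 hv hne).ne'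
end
end
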